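/- arXiv:1703.07097 — 2 statements merged into one kernel-verified Lean document; each statement's English description precedes it below -/
import Mathlib

section
/- Let Γ be a z-knotted combinatorial triangulation. Then for every face F of Γ exactly one of the following holds: (1) exactly one of the three edges of F is of second type, or (2) all three edges of F are of second type. (In particular it is impossible that exactly two edges of F are of second type, or that all three edges of F are of first type.) -/
universe u v

/-- The data of an embedded graph: a simple graph together with a collection of
(triangular) faces, each face recorded as the finite set of its vertices. -/
structure PreTriangulation (V : Type u) where
  graph : SimpleGraph V
  faces : Set (Finset V)

namespace PreTriangulation

variable {V : Type u} {V' : Type v}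

/-- `T` is a combinatorial triangulation: a finite simple connected graph together with
a collection of faces, each face being a set of three pairwise adjacent vertices, such that
every edge lies in exactly two faces and two distinct faces share at most one edge. -/
structure IsTriangulation [DecidableEq V] (T : PreTriangulation V) : Prop where
  finiteVerts : Finite V
  connected : T.graph.Connected
  face_card : ∀ F ∈ T.faces, F.card = 3
  face_adj : ∀ F ∈ T.faces, ∀ x ∈ F, ∀ y ∈ F, x ≠ y → T.graph.Adj x y
  edge_in_two_faces : ∀ x y : V, T.graph.Adj x y →
    {F | F ∈ T.faces ∧ x ∈ F ∧ y ∈ F}.ncard = 2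
  faces_share_at_most_one_edge :
    ∀ F ∈ T.faces, ∀ G ∈ T.faces, F ≠ G → (F ∩ G).card ≤ 2

section

variable [DecidableEq V] [DecidableEq V']

/-- A zigzag in `T`: a cyclic sequence of vertices (encoded as a periodic function `ℤ → V`
whose minimal period `n` is the length of the zigzag, with `n > 3`) such that any two
consecutive vertices are distinct and adjacent, any three consecutive vertices lie in a
unique face, and the faces determined by two consecutive triples are distinct. -/
structure Zigzag (T : PreTriangulation V) where
  n : ℕ
  three_lt_n : 3 < n
  seq : ℤ → V
  periodic : ∀ i : ℤ, seq (i + n) = seq i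
  n_minimal : ∀ m : ℕ, 0 < m → (∀ i : ℤ, seq (i + m) = seq i) → n ≤ m
  seq_ne : ∀ i : ℤ, seq i ≠ seq (i + 1)
  seq_adj : ∀ i : ℤ, T.graph.Adj (seq i) (seq (i + 1))
  face : ℤ → Finset V
  face_mem : ∀ i : ℤ, face i ∈ T.faces
  subset_face : ∀ i : ℤ, ({seq i, seq (i + 1), seq (i + 2)} : Finset V) ⊆ face i
  face_unique : ∀ i : ℤ, ∀ G ∈ T.faces,
    ({seq i, seq (i + 1), seq (i + 2)} : Finset V) ⊆ G → G = face i
  face_ne : ∀ i : ℤ, face i ≠ face (i + 1)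

variable {T : PreTriangulation V}

/-- Two zigzags are equivalent if they agree up to a cyclic shift or up to a cyclic
shift combined with reversal. -/
def ZigzagEquiv (Z Z' : T.Zigzag) : Prop :=
  (∃ k : ℤ, ∀ i : ℤ, Z'.seq i = Z.seq (i + k)) ∨
  (∃ k : ℤ, ∀ i : ℤ, Z'.seq i = Z.seq (k - i))

/-- `T` is z-knotted: it has exactly one zigzag up to cyclic shift and reversal. -/
def ZKnotted (T : PreTriangulation V) [DecidableEq V] : Prop :=
  Nonempty T.Zigzag ∧ ∀ Z Z' : T.Zigzag, ZigzagEquiv Z Z'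

/-- `T` has exactly two zigzags up to cyclic shift and reversal. -/
def HasExactlyTwoZigzags (T : PreTriangulation V) [DecidableEq V] : Prop :=
  ∃ Z₁ Z₂ : T.Zigzag, ¬ ZigzagEquiv Z₁ Z₂ ∧
    ∀ Z : T.Zigzag, ZigzagEquiv Z Z₁ ∨ ZigzagEquiv Z Z₂

/-- `T` has exactly three zigzags up to cyclic shift and reversal. -/
def HasExactlyThreeZigzags (T : PreTriangulation V) [DecidableEq V] : Prop :=
  ∃ Z₁ Z₂ Z₃ : T.Zigzag, ¬ ZigzagEquiv Z₁ Z₂ ∧ ¬ ZigzagEquiv Z₁ Z₃ ∧ ¬ ZigzagEquiv Z₂ Z₃ ∧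
    ∀ Z : T.Zigzag, ZigzagEquiv Z Z₁ ∨ ZigzagEquiv Z Z₂ ∨ ZigzagEquiv Z Z₃

namespace Zigzag

/-- The zigzag passes from `x` to `y` (in this order) at some position. -/
def Passes (Z : T.Zigzag) (x y : V) : Prop :=
  ∃ i : ℤ, Z.seq i = x ∧ Z.seq (i + 1) = y

/-- The zigzag passes from `x` to `y` (in this order) at two distinct positions
of the cyclic sequence. -/
def PassesTwice (Z : T.Zigzag) (x y : V) : Prop :=
  ∃ i j : ℤ, (i : ZMod Z.n) ≠ (j : ZMod Z.n) ∧
    Z.seq i = x ∧ Z.seq (i + 1) = y ∧ Z.seq j = x ∧ Z.seq (j + 1) = y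

/-- The edge `{x, y}` is of first type: the zigzag contains both `x, y` and `y, x`
as pairs of consecutive vertices. -/
def FirstTypeEdge (Z : T.Zigzag) (x y : V) : Prop := Z.Passes x y ∧ Z.Passes y x

/-- The edge `{x, y}` is of second type: the zigzag contains the same ordered pair
(`x, y` or `y, x`) twice. -/
def SecondTypeEdge (Z : T.Zigzag) (x y : V) : Prop :=
  Z.PassesTwice x y ∨ Z.PassesTwice y x

/-- The number of positions of the cyclic sequence at which the pair of consecutive
vertices equals `{x, y}` (in either order). -/
noncomputable def passCount (Z : T.Zigzag) (x y : V) : ℕ :=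
  Nat.card {i : Fin Z.n //
    (Z.seq ((i : ℕ) : ℤ) = x ∧ Z.seq (((i : ℕ) : ℤ) + 1) = y) ∨
    (Z.seq ((i : ℕ) : ℤ) = y ∧ Z.seq (((i : ℕ) : ℤ) + 1) = x)}

/-- The number of positions of the cyclic sequence at which the triple of consecutive
vertices has vertex set equal to `F`. -/
noncomputable def faceCount (Z : T.Zigzag) (F : Finset V) : ℕ :=
  Nat.card {i : Fin Z.n //
    ({Z.seq ((i : ℕ) : ℤ), Z.seq (((i : ℕ) : ℤ) + 1), Z.seq (((i : ℕ) : ℤ) + 2)} :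
      Finset V) = F}

/-- The three consecutive vertices of the zigzag at position `i` are `x, y, z`. -/
def TripleAt (Z : T.Zigzag) (i : ℤ) (x y z : V) : Prop :=
  Z.seq i = x ∧ Z.seq (i + 1) = y ∧ Z.seq (i + 2) = z

/-- The zigzag has the cyclic form `x₁,y₁,z₁, …, x₂,y₂,z₂, …, x₃,y₃,z₃, …`:
the three triples occur in this cyclic order within one period. -/
def CyclicTriples (Z : T.Zigzag) (x₁ y₁ z₁ x₂ y₂ z₂ x₃ y₃ z₃ : V) : Prop :=
  ∃ (i : ℤ) (p q : ℕ), 0 < p ∧ p < q ∧ q < Z.n ∧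
    Z.TripleAt i x₁ y₁ z₁ ∧ Z.TripleAt (i + p) x₂ y₂ z₂ ∧ Z.TripleAt (i + q) x₃ y₃ z₃

/-- `F` is a `(1,1,2)`-face: exactly one of its three edges is of second type. -/
def Is112Face (Z : T.Zigzag) (F : Finset V) : Prop :=
  ∃ x y z : V, F = {x, y, z} ∧ x ≠ y ∧ x ≠ z ∧ y ≠ z ∧
    Z.SecondTypeEdge y z ∧ ¬ Z.SecondTypeEdge x y ∧ ¬ Z.SecondTypeEdge x z

/-- `F` is a `(2,2,2)`-face: all three of its edges are of second type. -/
def Is222Face (Z : T.Zigzag) (F : Finset V) : Prop :=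
  ∃ x y z : V, F = {x, y, z} ∧ x ≠ y ∧ x ≠ z ∧ y ≠ z ∧
    Z.SecondTypeEdge x y ∧ Z.SecondTypeEdge y z ∧ Z.SecondTypeEdge x z

/-- `F` is a `(1,1,2)`-face of odd type: with vertices `x, y, z`, where `{y, z}` is the
edge of second type and the zigzag twice passes from `y` to `z`, the zigzag has the
cyclic form `x,y,z, …, y,x,z, …, y,z,x, …`. -/
def Is112OddFace (Z : T.Zigzag) (F : Finset V) : Prop :=
  ∃ x y z : V, F = {x, y, z} ∧ x ≠ y ∧ x ≠ z ∧ y ≠ z ∧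
    Z.SecondTypeEdge y z ∧ ¬ Z.SecondTypeEdge x y ∧ ¬ Z.SecondTypeEdge x z ∧
    Z.PassesTwice y z ∧ Z.CyclicTriples x y z y x z y z x

/-- `F` is a `(1,1,2)`-face of even type: with vertices `x, y, z`, where `{y, z}` is the
edge of second type and the zigzag twice passes from `y` to `z`, the zigzag has the
cyclic form `x,y,z, …, y,z,x, …, y,x,z, …`. -/
def Is112EvenFace (Z : T.Zigzag) (F : Finset V) : Prop :=
  ∃ x y z : V, F = {x, y, z} ∧ x ≠ y ∧ x ≠ z ∧ y ≠ z ∧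
    Z.SecondTypeEdge y z ∧ ¬ Z.SecondTypeEdge x y ∧ ¬ Z.SecondTypeEdge x z ∧
    Z.PassesTwice y z ∧ Z.CyclicTriples x y z y z x y x z

/-- `F` is a `(2,2,2)`-face of first type: with vertices `x, y, z` such that the zigzag
twice passes from `x` to `y`, twice from `y` to `z` and twice from `z` to `x`, the
zigzag has the cyclic form `x,y,z, …, z,x,y, …, y,z,x, …`. -/
def Is222FirstFace (Z : T.Zigzag) (F : Finset V) : Prop :=
  ∃ x y z : V, F = {x, y, z} ∧ x ≠ y ∧ x ≠ z ∧ y ≠ z ∧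
    Z.PassesTwice x y ∧ Z.PassesTwice y z ∧ Z.PassesTwice z x ∧
    Z.CyclicTriples x y z z x y y z x

/-- `F` is a `(2,2,2)`-face of second type: with vertices `x, y, z` such that the zigzag
twice passes from `x` to `y`, twice from `y` to `z` and twice from `z` to `x`, the
zigzag has the cyclic form `x,y,z, …, y,z,x, …, z,x,y, …`. -/
def Is222SecondFace (Z : T.Zigzag) (F : Finset V) : Prop :=
  ∃ x y z : V, F = {x, y, z} ∧ x ≠ y ∧ x ≠ z ∧ y ≠ z ∧
    Z.PassesTwice x y ∧ Z.PassesTwice y z ∧ Z.PassesTwice z x ∧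
    Z.CyclicTriples x y z y z x z x y

/-- `a` is the vertex of the face `F` which does not lie on an edge of `F` of
second type. -/
def IsApex (Z : T.Zigzag) (F : Finset V) (a : V) : Prop :=
  a ∈ F ∧ ∀ y ∈ F, y ≠ a → ¬ Z.SecondTypeEdge a y

end Zigzag

end

section ConnectedSum

variable [DecidableEq V] [DecidableEq V']

/-- The map gluing `Γ'` onto `Γ`: a vertex of `F'` is sent to the corresponding
(under `g`) vertex of `F`, all other vertices of `Γ'` are kept. -/
noncomputable def glueMap [Nonempty V] (F : Finset V) (F' : Finset V') (g : V → V') (y : V') :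
    V ⊕ {y : V' // y ∉ F'} :=
  if h : y ∈ F' then Sum.inl (Function.invFunOn g ↑F y) else Sum.inr ⟨y, h⟩

/-- The connected sum `T #_g T'` of two triangulations along the faces `F` and `F'`,
via the identification `g` of the vertices of `F` with the vertices of `F'`:
the disjoint union of `T` and `T'` in which every vertex `v` of `F` is identified with
`g v` (and the edges of `F` are identified with the corresponding edges of `F'`),
whose faces are all faces of `T` other than `F` together with all faces of `T'`
other than `F'`. -/
noncomputable def connectedSum [Nonempty V] (T : PreTriangulation V) (T' : PreTriangulation V')
    (F : Finset V) (F' : Finset V') (g : V → V') :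
    PreTriangulation (V ⊕ {y : V' // y ∉ F'}) where
  graph :=
    { Adj := fun u v => u ≠ v ∧
        ((∃ x y : V, T.graph.Adj x y ∧ u = Sum.inl x ∧ v = Sum.inl y) ∨
         (∃ x y : V', T'.graph.Adj x y ∧ u = glueMap F F' g x ∧ v = glueMap F F' g y))
      symm := by
        refine ⟨?_⟩
        rintro u v ⟨hne, h⟩
        refine ⟨hne.symm, ?_⟩
        rcases h with ⟨x, y, hxy, hu, hv⟩ | ⟨x, y, hxy, hu, hv⟩
        · exact Or.inl ⟨y, x, hxy.symm, hv, hu⟩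
        · exact Or.inr ⟨y, x, hxy.symm, hv, hu⟩
      loopless := ⟨fun u h => h.1 rfl⟩ }
  faces :=
    {G | (∃ A ∈ T.faces, A ≠ F ∧ G = A.image Sum.inl) ∨
         (∃ A ∈ T'.faces, A ≠ F' ∧ G = A.image (glueMap F F' g))}

end ConnectedSum

/-- `T` and `T'` are isomorphic as graphs together with their collections of faces. -/
def IsIsoTo [DecidableEq V'] (T : PreTriangulation V) (T' : PreTriangulation V') : Prop :=
  ∃ e : V ≃ V', (∀ x y : V, T.graph.Adj x y ↔ T'.graph.Adj (e x) (e y)) ∧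
    (∀ G : Finset V, G ∈ T.faces ↔ G.image e ∈ T'.faces)

/-- The bipyramid `BP n`.  The two apices `a, b` are `Sum.inl true, Sum.inl false`;
the vertices `1, …, n` of the `n`-gon are `Sum.inr 0, …, Sum.inr (n-1)` (that is, the
paper's vertex `i` is `Sum.inr (i - 1)`). -/
def bp (n : ℕ) : PreTriangulation (Bool ⊕ ZMod n) where
  graph :=
    { Adj := fun u v =>
        match u, v with
        | Sum.inl _, Sum.inl _ => False
        | Sum.inl _, Sum.inr _ => True
        | Sum.inr _, Sum.inl _ => True
        | Sum.inr i, Sum.inr j => i ≠ j ∧ (j = i + 1 ∨ i = j + 1)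
      symm := by
        refine ⟨?_⟩
        rintro (s | i) (t | j) h
        · exact h.elim
        · trivial
        · trivial
        · exact ⟨h.1.symm, h.2.symm⟩
      loopless := by
        refine ⟨?_⟩
        rintro (s | i) h
        · exact h
        · exact h.1 rfl }
  faces := {G | ∃ (s : Bool) (i : ZMod n), G = {Sum.inl s, Sum.inr i, Sum.inr (i + 1)}}

/-- The complete graph on four vertices regarded as a combinatorial triangulation whose
faces are all four 3-element vertex subsets. -/
def k4 : PreTriangulation (Fin 4) where
  graph := ⊤
  faces := {G | G.card = 3}

/-- The cyclic sequence `a, 1+c, 2+c, b, 3+c, 4+c, …, a, n-1+c, n+c, b, 1+c, 2+c, a, 3+c, 4+c,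
…, b, n-1+c, n+c` in the bipyramid `BP n` (for `n` even), of length `3 n`, written in the
paper's labels; `c` is an offset.  Here `a = Sum.inl true`, `b = Sum.inl false` and the
paper's vertex `i` is `Sum.inr (i - 1)`. -/
def bpZigSeq (n : ℕ) (c : ZMod n) : ℤ → Bool ⊕ ZMod n := fun i =>
  let j : ℕ := (i % (3 * (n : ℤ))).toNat
  if j % 3 = 0 then Sum.inl (decide (j / 3 % 2 = 0))
  else Sum.inr (((2 * (j / 3) + (if j % 3 = 1 then 0 else 1) : ℕ) : ZMod n) + c)

end PreTriangulation

namespace PreTriangulation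

variable {V : Type u} [DecidableEq V] {T : PreTriangulation V}

private lemma triple_card {a b c : V} (hab : a ≠ b) (hac : a ≠ c) (hbc : b ≠ c) :
    ({a, b, c} : Finset V).card = 3 := by
  rw [Finset.card_insert_of_notMem (by simp [hab, hac]),
    Finset.card_insert_of_notMem (by simp [hbc]), Finset.card_singleton]

lemma IsTriangulation.face_eq_of (hT : T.IsTriangulation) {G G' : Finset V} {a b c : V}
    (hG : G ∈ T.faces) (hG' : G' ∈ T.faces)
    (hab : a ≠ b) (hac : a ≠ c) (hbc : b ≠ c)
    (ha : a ∈ G) (hb : b ∈ G) (hc : c ∈ G)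
    (ha' : a ∈ G') (hb' : b ∈ G') (hc' : c ∈ G') : G = G' := by
  by_contra hne
  have h2 := hT.faces_share_at_most_one_edge G hG G' hG' hne
  have hsub : ({a, b, c} : Finset V) ⊆ G ∩ G' := by
    intro t ht
    simp only [Finset.mem_insert, Finset.mem_singleton] at ht
    rcases ht with rfl | rfl | rfl <;> simp [Finset.mem_inter, *]
  have := Finset.card_le_card hsub
  rw [triple_card hab hac hbc] at this
  omega

lemma IsTriangulation.face_eq_triple (hT : T.IsTriangulation) {G : Finset V} {a b c : V}
    (hG : G ∈ T.faces) (hab : a ≠ b) (hac : a ≠ c) (hbc : b ≠ c)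
    (ha : a ∈ G) (hb : b ∈ G) (hc : c ∈ G) : G = {a, b, c} := by
  have hsub : ({a, b, c} : Finset V) ⊆ G := by
    intro t ht
    simp only [Finset.mem_insert, Finset.mem_singleton] at ht
    rcases ht with rfl | rfl | rfl <;> assumption
  refine (Finset.eq_of_subset_of_card_le hsub ?_).symm
  rw [hT.face_card G hG, triple_card hab hac hbc]

lemma IsTriangulation.otherFace_eq (hT : T.IsTriangulation) {a b : V}
    (hadj : T.graph.Adj a b) {G₁ G₂ G₃ : Finset V}
    (h1 : G₁ ∈ T.faces) (h2 : G₂ ∈ T.faces) (h3 : G₃ ∈ T.faces)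
    (ha1 : a ∈ G₁) (hb1 : b ∈ G₁) (ha2 : a ∈ G₂) (hb2 : b ∈ G₂)
    (ha3 : a ∈ G₃) (hb3 : b ∈ G₃)
    (h13 : G₁ ≠ G₃) (h23 : G₂ ≠ G₃) : G₁ = G₂ := by
  have hn := hT.edge_in_two_faces a b hadj
  rw [Set.ncard_eq_two] at hn
  obtain ⟨P, Q, hPQ, hS⟩ := hn
  have m1 : G₁ ∈ ({P, Q} : Set (Finset V)) := by rw [← hS]; exact ⟨h1, ha1, hb1⟩
  have m2 : G₂ ∈ ({P, Q} : Set (Finset V)) := by rw [← hS]; exact ⟨h2, ha2, hb2⟩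
  have m3 : G₃ ∈ ({P, Q} : Set (Finset V)) := by rw [← hS]; exact ⟨h3, ha3, hb3⟩
  simp only [Set.mem_insert_iff, Set.mem_singleton_iff] at m1 m2 m3
  rcases m1 with h | h <;> rcases m2 with h' | h' <;> rcases m3 with h'' | h'' <;>
    subst h <;> subst h' <;> first | rfl | (exfalso; subst h'' ; tauto)

lemma IsTriangulation.exists_otherFace (hT : T.IsTriangulation) {a b : V}
    (hadj : T.graph.Adj a b) {G : Finset V} (hG : G ∈ T.faces) (ha : a ∈ G) (hb : b ∈ G) :
    ∃ G', G' ∈ T.faces ∧ a ∈ G' ∧ b ∈ G' ∧ G' ≠ G := by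
  have hn := hT.edge_in_two_faces a b hadj
  rw [Set.ncard_eq_two] at hn
  obtain ⟨P, Q, hPQ, hS⟩ := hn
  have mG : G ∈ ({P, Q} : Set (Finset V)) := by rw [← hS]; exact ⟨hG, ha, hb⟩
  have mP : P ∈ {F | F ∈ T.faces ∧ a ∈ F ∧ b ∈ F} := by rw [hS]; exact Set.mem_insert _ _
  have mQ : Q ∈ {F | F ∈ T.faces ∧ a ∈ F ∧ b ∈ F} := by
    rw [hS]; exact Set.mem_insert_iff.2 (Or.inr rfl)
  simp only [Set.mem_insert_iff, Set.mem_singleton_iff] at mG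
  rcases mG with rfl | rfl
  · exact ⟨Q, mQ.1, mQ.2.1, mQ.2.2, Ne.symm hPQ⟩
  · exact ⟨P, mP.1, mP.2.1, mP.2.2, hPQ⟩

namespace Zigzag

variable (Z : T.Zigzag)

lemma mem₀ (i : ℤ) : Z.seq i ∈ Z.face i := Z.subset_face i (by simp)
lemma mem₁ (i : ℤ) : Z.seq (i + 1) ∈ Z.face i := Z.subset_face i (by simp)
lemma mem₂ (i : ℤ) : Z.seq (i + 2) ∈ Z.face i := Z.subset_face i (by simp)

lemma seq_ne_two (hT : T.IsTriangulation) (i : ℤ) : Z.seq (i + 2) ≠ Z.seq i := by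
  intro h
  obtain ⟨G', hG', haG', hbG', hne⟩ :=
    hT.exists_otherFace (Z.seq_adj i) (Z.face_mem i) (Z.mem₀ i) (Z.mem₁ i)
  apply hne
  apply Z.face_unique i G' hG'
  intro t ht
  simp only [Finset.mem_insert, Finset.mem_singleton] at ht
  rcases ht with rfl | rfl | rfl
  · exact haG'
  · exact hbG'
  · rw [h]; exact haG'

lemma seq_ne' (i : ℤ) : Z.seq (i + 1) ≠ Z.seq (i + 2) := by
  have := Z.seq_ne (i + 1)
  rwa [show i + 1 + 1 = i + 2 by ring] at this

lemma face_eq (hT : T.IsTriangulation) (i : ℤ) :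
    Z.face i = {Z.seq i, Z.seq (i + 1), Z.seq (i + 2)} :=
  hT.face_eq_triple (Z.face_mem i) (Z.seq_ne i) (Ne.symm (Z.seq_ne_two hT i))
    (Z.seq_ne' i) (Z.mem₀ i) (Z.mem₁ i) (Z.mem₂ i)

lemma seq_per_mul : ∀ (m : ℤ) (i : ℤ), Z.seq (i + (Z.n : ℤ) * m) = Z.seq i := by
  intro m
  induction m using Int.induction_on with
  | zero => simp
  | succ k ih =>
    intro i
    rw [show i + (Z.n : ℤ) * ((k : ℤ) + 1) = (i + (Z.n : ℤ) * k) + (Z.n : ℤ) by ring,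
      Z.periodic, ih]
  | pred k ih =>
    intro i
    have h2 := Z.periodic (i + (Z.n : ℤ) * (-(k : ℤ) - 1))
    rw [show i + (Z.n : ℤ) * (-(k : ℤ) - 1) + (Z.n : ℤ) = i + (Z.n : ℤ) * (-(k : ℤ)) by ring]
      at h2
    rw [← h2]
    exact ih i

lemma seq_per_dvd {d : ℤ} (hd : (Z.n : ℤ) ∣ d) (i : ℤ) : Z.seq (i + d) = Z.seq i := by
  obtain ⟨m, rfl⟩ := hd
  exact Z.seq_per_mul m i

lemma face_per_dvd (hT : T.IsTriangulation) {d : ℤ} (hd : (Z.n : ℤ) ∣ d) (i : ℤ) :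
    Z.face (i + d) = Z.face i := by
  rw [Z.face_eq hT (i + d), Z.face_eq hT i,
    show i + d + 1 = (i + 1) + d by ring, show i + d + 2 = (i + 2) + d by ring,
    Z.seq_per_dvd hd, Z.seq_per_dvd hd, Z.seq_per_dvd hd]

lemma fwd_det (hT : T.IsTriangulation) {i j : ℤ}
    (h1 : Z.seq i = Z.seq j) (h2 : Z.seq (i + 1) = Z.seq (j + 1))
    (h3 : Z.face i = Z.face j) :
    Z.seq (i + 2) = Z.seq (j + 2) ∧ Z.face (i + 1) = Z.face (j + 1) := by
  have hs2 : Z.seq (i + 2) = Z.seq (j + 2) := by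
    have hmem : Z.seq (i + 2) ∈ Z.face j := h3 ▸ Z.mem₂ i
    rw [Z.face_eq hT j] at hmem
    simp only [Finset.mem_insert, Finset.mem_singleton] at hmem
    rcases hmem with h | h | h
    · exact absurd (h.trans h1.symm) (Z.seq_ne_two hT i)
    · exact absurd (h.trans h2.symm) (Ne.symm (Z.seq_ne' i))
    · exact h
  refine ⟨hs2, ?_⟩
  have hadj : T.graph.Adj (Z.seq (i + 1)) (Z.seq (i + 2)) := by
    have := Z.seq_adj (i + 1)
    rwa [show i + 1 + 1 = i + 2 by ring] at this
  refine hT.otherFace_eq hadj (Z.face_mem (i + 1)) (Z.face_mem (j + 1)) (Z.face_mem i)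
    (Z.mem₀ (i + 1)) ?_ ?_ ?_ (Z.mem₁ i) (Z.mem₂ i) (Ne.symm (Z.face_ne i)) ?_
  · have := Z.mem₁ (i + 1)
    rwa [show i + 1 + 1 = i + 2 by ring] at this
  · rw [h2]; exact Z.mem₀ (j + 1)
  · rw [hs2]
    have := Z.mem₁ (j + 1)
    rwa [show j + 1 + 1 = j + 2 by ring] at this
  · rw [h3]; exact Ne.symm (Z.face_ne j)

lemma bwd_det (hT : T.IsTriangulation) {i j : ℤ}
    (h2 : Z.seq (i + 1) = Z.seq (j + 1)) (h3 : Z.seq (i + 2) = Z.seq (j + 2))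
    (hf : Z.face (i + 1) = Z.face (j + 1)) :
    Z.seq i = Z.seq j ∧ Z.face i = Z.face j := by
  have hadj : T.graph.Adj (Z.seq (i + 1)) (Z.seq (i + 2)) := by
    have := Z.seq_adj (i + 1)
    rwa [show i + 1 + 1 = i + 2 by ring] at this
  have hface : Z.face i = Z.face j := by
    refine hT.otherFace_eq hadj (Z.face_mem i) (Z.face_mem j) (Z.face_mem (i + 1))
      (Z.mem₁ i) (Z.mem₂ i) ?_ ?_ (Z.mem₀ (i + 1)) ?_ (Z.face_ne i) ?_
    · rw [h2]; exact Z.mem₁ j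
    · rw [h3]; exact Z.mem₂ j
    · have := Z.mem₁ (i + 1)
      rwa [show i + 1 + 1 = i + 2 by ring] at this
    · rw [hf]; exact Z.face_ne j
  refine ⟨?_, hface⟩
  have hmem : Z.seq i ∈ Z.face j := hface ▸ Z.mem₀ i
  rw [Z.face_eq hT j] at hmem
  simp only [Finset.mem_insert, Finset.mem_singleton] at hmem
  rcases hmem with h | h | h
  · exact h
  · exact absurd (h.trans h2.symm) (Z.seq_ne i)
  · exact absurd (h.trans h3.symm).symm (Z.seq_ne_two hT i)

lemma cross_fwd (hT : T.IsTriangulation) {i j : ℤ}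
    (h1 : Z.seq i = Z.seq (j + 2)) (h2 : Z.seq (i + 1) = Z.seq (j + 1))
    (h3 : Z.face i = Z.face j) :
    Z.seq (i + 2) = Z.seq j ∧ Z.face (i + 1) = Z.face (j - 1) := by
  have hs2 : Z.seq (i + 2) = Z.seq j := by
    have hmem : Z.seq (i + 2) ∈ Z.face j := h3 ▸ Z.mem₂ i
    rw [Z.face_eq hT j] at hmem
    simp only [Finset.mem_insert, Finset.mem_singleton] at hmem
    rcases hmem with h | h | h
    · exact h
    · exact absurd (h.trans h2.symm) (Ne.symm (Z.seq_ne' i))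
    · exact absurd (h.trans h1.symm) (Z.seq_ne_two hT i)
  refine ⟨hs2, ?_⟩
  have hadj : T.graph.Adj (Z.seq (i + 1)) (Z.seq (i + 2)) := by
    have := Z.seq_adj (i + 1)
    rwa [show i + 1 + 1 = i + 2 by ring] at this
  refine hT.otherFace_eq hadj (Z.face_mem (i + 1)) (Z.face_mem (j - 1)) (Z.face_mem i)
    (Z.mem₀ (i + 1)) ?_ ?_ ?_ (Z.mem₁ i) (Z.mem₂ i) (Ne.symm (Z.face_ne i)) ?_
  · have := Z.mem₁ (i + 1)
    rwa [show i + 1 + 1 = i + 2 by ring] at this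
  · rw [h2]
    have := Z.mem₂ (j - 1)
    rwa [show j - 1 + 2 = j + 1 by ring] at this
  · rw [hs2]
    have := Z.mem₁ (j - 1)
    rwa [show j - 1 + 1 = j by ring] at this
  · rw [h3]
    have := Z.face_ne (j - 1)
    rw [show j - 1 + 1 = j by ring] at this
    exact this
  
lemma cross_bwd (hT : T.IsTriangulation) {i j : ℤ}
    (h1 : Z.seq i = Z.seq (j + 2)) (h2 : Z.seq (i + 1) = Z.seq (j + 1))
    (h3 : Z.face i = Z.face j) :
    Z.seq (i - 1) = Z.seq (j + 3) ∧ Z.face (i - 1) = Z.face (j + 1) := by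
  have hadj : T.graph.Adj (Z.seq i) (Z.seq (i + 1)) := Z.seq_adj i
  have hface : Z.face (i - 1) = Z.face (j + 1) := by
    refine hT.otherFace_eq hadj (Z.face_mem (i - 1)) (Z.face_mem (j + 1)) (Z.face_mem i)
      ?_ ?_ ?_ ?_ (Z.mem₀ i) (Z.mem₁ i) ?_ ?_
    · have := Z.mem₁ (i - 1)
      rwa [show i - 1 + 1 = i by ring] at this
    · have := Z.mem₂ (i - 1)
      rwa [show i - 1 + 2 = i + 1 by ring] at this
    · rw [h1]
      have := Z.mem₁ (j + 1)
      rwa [show j + 1 + 1 = j + 2 by ring] at this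
    · rw [h2]; exact Z.mem₀ (j + 1)
    · have := Z.face_ne (i - 1)
      rwa [show i - 1 + 1 = i by ring] at this
    · rw [h3]; exact Ne.symm (Z.face_ne j)
  refine ⟨?_, hface⟩
  have hmem : Z.seq (i - 1) ∈ Z.face (j + 1) := hface ▸ Z.mem₀ (i - 1)
  rw [Z.face_eq hT (j + 1)] at hmem
  rw [show j + 1 + 1 = j + 2 by ring, show j + 1 + 2 = j + 3 by ring] at hmem
  simp only [Finset.mem_insert, Finset.mem_singleton] at hmem
  rcases hmem with h | h | h
  · exfalso
    rw [← h2] at h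
    have := Z.seq_ne_two hT (i - 1)
    rw [show i - 1 + 2 = i + 1 by ring] at this
    exact this h.symm
  · exfalso
    rw [← h1] at h
    have := Z.seq_ne (i - 1)
    rw [show i - 1 + 1 = i by ring] at this
    exact this h
  · exact h

lemma chainFF (hT : T.IsTriangulation) {i j : ℤ}
    (h1 : Z.seq i = Z.seq j) (h2 : Z.seq (i + 1) = Z.seq (j + 1))
    (h3 : Z.face i = Z.face j) :
    ∀ k : ℤ, Z.seq (i + k) = Z.seq (j + k) ∧ Z.seq (i + k + 1) = Z.seq (j + k + 1) ∧
      Z.face (i + k) = Z.face (j + k) := by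
  intro k
  induction k using Int.induction_on with
  | zero => simpa using ⟨h1, h2, h3⟩
  | succ k ih =>
    obtain ⟨e1, e2, e3⟩ := ih
    obtain ⟨f1, f2⟩ := Z.fwd_det hT e1 e2 e3
    refine ⟨?_, ?_, ?_⟩
    · rw [show i + ((k : ℤ) + 1) = i + k + 1 by ring, show j + ((k : ℤ) + 1) = j + k + 1 by ring]
      exact e2
    · rw [show i + ((k : ℤ) + 1) + 1 = i + k + 2 by ring,
        show j + ((k : ℤ) + 1) + 1 = j + k + 2 by ring]
      exact f1
    · rw [show i + ((k : ℤ) + 1) = i + k + 1 by ring, show j + ((k : ℤ) + 1) = j + k + 1 by ring]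
      exact f2
  | pred k ih =>
    obtain ⟨e1, e2, e3⟩ := ih
    have hb := Z.bwd_det hT (i := i + (-(k : ℤ) - 1)) (j := j + (-(k : ℤ) - 1)) ?_ ?_ ?_
    · refine ⟨hb.1, ?_, hb.2⟩
      rw [show i + (-(k : ℤ) - 1) + 1 = i + (-(k : ℤ)) by ring,
        show j + (-(k : ℤ) - 1) + 1 = j + (-(k : ℤ)) by ring]
      exact e1
    · rw [show i + (-(k : ℤ) - 1) + 1 = i + (-(k : ℤ)) by ring,
        show j + (-(k : ℤ) - 1) + 1 = j + (-(k : ℤ)) by ring]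
      exact e1
    · rw [show i + (-(k : ℤ) - 1) + 2 = i + (-(k : ℤ)) + 1 by ring,
        show j + (-(k : ℤ) - 1) + 2 = j + (-(k : ℤ)) + 1 by ring]
      exact e2
    · rw [show i + (-(k : ℤ) - 1) + 1 = i + (-(k : ℤ)) by ring,
        show j + (-(k : ℤ) - 1) + 1 = j + (-(k : ℤ)) by ring]
      exact e3

lemma chainFR (hT : T.IsTriangulation) {i j : ℤ}
    (h1 : Z.seq i = Z.seq (j + 2)) (h2 : Z.seq (i + 1) = Z.seq (j + 1))
    (h3 : Z.face i = Z.face j) :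
    ∀ k : ℤ, Z.seq (i + k) = Z.seq (j + 2 - k) ∧ Z.seq (i + k + 1) = Z.seq (j + 1 - k) ∧
      Z.face (i + k) = Z.face (j - k) := by
  intro k
  induction k using Int.induction_on with
  | zero =>
    refine ⟨?_, ?_, ?_⟩ <;> simp only [add_zero, sub_zero] <;> assumption
  | succ k ih =>
    obtain ⟨e1, e2, e3⟩ := ih
    have hc := Z.cross_fwd hT (i := i + (k : ℤ)) (j := j - (k : ℤ)) ?_ ?_ ?_
    · refine ⟨?_, ?_, ?_⟩
      · rw [show i + ((k : ℤ) + 1) = i + k + 1 by ring,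
          show j + 2 - ((k : ℤ) + 1) = j + 1 - k by ring]
        exact e2
      · rw [show i + ((k : ℤ) + 1) + 1 = i + k + 2 by ring,
          show j + 1 - ((k : ℤ) + 1) = j - k by ring]
        exact hc.1
      · rw [show i + ((k : ℤ) + 1) = i + k + 1 by ring,
          show j - ((k : ℤ) + 1) = j - k - 1 by ring]
        exact hc.2
    · rw [show j - (k : ℤ) + 2 = j + 2 - k by ring]
      exact e1
    · rw [show j - (k : ℤ) + 1 = j + 1 - k by ring]
      exact e2
    · exact e3
  | pred k ih =>
    obtain ⟨e1, e2, e3⟩ := ih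
    have hc := Z.cross_bwd hT (i := i + (-(k : ℤ))) (j := j - (-(k : ℤ))) ?_ ?_ ?_
    · refine ⟨?_, ?_, ?_⟩
      · rw [show i + (-(k : ℤ) - 1) = i + (-(k : ℤ)) - 1 by ring,
          show j + 2 - (-(k : ℤ) - 1) = j - (-(k : ℤ)) + 3 by ring]
        exact hc.1
      · rw [show i + (-(k : ℤ) - 1) + 1 = i + (-(k : ℤ)) by ring,
          show j + 1 - (-(k : ℤ) - 1) = j + 2 - (-(k : ℤ)) by ring]
        exact e1
      · rw [show i + (-(k : ℤ) - 1) = i + (-(k : ℤ)) - 1 by ring,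
          show j - (-(k : ℤ) - 1) = j - (-(k : ℤ)) + 1 by ring]
        exact hc.2
    · rw [show j - (-(k : ℤ)) + 2 = j + 2 - (-(k : ℤ)) by ring]
      exact e1
    · rw [show j - (-(k : ℤ)) + 1 = j + 1 - (-(k : ℤ)) by ring]
      exact e2
    · exact e3

lemma period_dvd {d : ℤ} (hd : ∀ t : ℤ, Z.seq (t + d) = Z.seq t) : (Z.n : ℤ) ∣ d := by
  let H : AddSubgroup ℤ :=
    { carrier := {e | ∀ t : ℤ, Z.seq (t + e) = Z.seq t}
      zero_mem' := by intro t; simp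
      add_mem' := by
        intro a b ha hb t
        rw [show t + (a + b) = t + b + a by ring, ha, hb]
      neg_mem' := by
        intro a ha t
        have h := ha (t + -a)
        rw [show t + -a + a = t by ring] at h
        exact h.symm }
  have hnH : ((Z.n : ℤ)) ∈ H := fun t => Z.periodic t
  have hdH : d ∈ H := hd
  obtain ⟨g, hg⟩ := Int.subgroup_cyclic H
  have hmem : ∀ x : ℤ, x ∈ H ↔ g ∣ x := by
    intro x
    rw [hg, AddSubgroup.mem_closure_singleton]
    constructor
    · rintro ⟨m, rfl⟩; exact ⟨m, by rw [smul_eq_mul]; ring⟩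
    · rintro ⟨c, rfl⟩; exact ⟨c, by rw [smul_eq_mul]; ring⟩
  have hgn : g ∣ (Z.n : ℤ) := (hmem _).1 hnH
  have hgd : g ∣ d := (hmem _).1 hdH
  have hn3 := Z.three_lt_n
  have hg0 : g ≠ 0 := by
    rintro rfl
    have : (Z.n : ℤ) = 0 := by simpa using hgn
    omega
  have hgH : g ∈ H := (hmem g).2 dvd_rfl
  have habs : ((g.natAbs : ℤ)) ∈ H := by
    rcases Int.natAbs_eq g with h | h
    · rw [← h]; exact hgH
    · rw [show ((g.natAbs : ℤ)) = -g by omega]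
      exact H.neg_mem hgH
  have hpos : 0 < g.natAbs := Int.natAbs_pos.2 hg0
  have hle : Z.n ≤ g.natAbs := Z.n_minimal g.natAbs hpos (fun i => habs i)
  have hdvd' : g.natAbs ∣ Z.n := by
    have h1 : ((g.natAbs : ℤ)) ∣ (Z.n : ℤ) := (Int.natAbs_dvd).2 hgn
    exact Int.natCast_dvd_natCast.mp h1
  have heq : g.natAbs = Z.n := le_antisymm (Nat.le_of_dvd (by omega) hdvd') hle
  have h2 : ((g.natAbs : ℤ)) ∣ d := (Int.natAbs_dvd).2 hgd
  rwa [heq] at h2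

lemma flag_dvd (hT : T.IsTriangulation) {i j : ℤ}
    (h1 : Z.seq i = Z.seq j) (h2 : Z.seq (i + 1) = Z.seq (j + 1))
    (h3 : Z.face i = Z.face j) : (Z.n : ℤ) ∣ (i - j) := by
  apply Z.period_dvd
  intro t
  have h := (Z.chainFF hT h1 h2 h3 (t - j)).1
  rw [show i + (t - j) = t + (i - j) by ring, show j + (t - j) = t by ring] at h
  exact h

lemma cast_eq_iff {i j : ℤ} :
    ((i : ZMod Z.n) = (j : ZMod Z.n)) ↔ (Z.n : ℤ) ∣ (i - j) := by
  rw [ZMod.intCast_eq_intCast_iff, Int.modEq_iff_dvd, show j - i = -(i - j) by ring, dvd_neg]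

end Zigzag

end PreTriangulation
namespace PreTriangulation

variable {V : Type u} [DecidableEq V] {T : PreTriangulation V}

namespace Zigzag

variable (Z : T.Zigzag)

lemma passesTwice_iff (hT : T.IsTriangulation) {F : Finset V} (hF : F ∈ T.faces)
    {u v : V} (hu : u ∈ F) (hv : v ∈ F) (huv : u ≠ v) :
    Z.PassesTwice u v ↔
      ((∃ i, Z.seq i = u ∧ Z.seq (i + 1) = v ∧ Z.face i = F) ∧
       (∃ j, Z.seq (j + 2) = v ∧ Z.seq (j + 1) = u ∧ Z.face j = F)) := by
  constructor
  · rintro ⟨i, j, hij, e1, e2, e3, e4⟩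
    have hfij : Z.face i ≠ Z.face j := by
      intro hf
      exact hij (Z.cast_eq_iff.2 (Z.flag_dvd hT (e1.trans e3.symm) (e2.trans e4.symm) hf))
    have hadj : T.graph.Adj u v := by
      have := Z.seq_adj i
      rwa [e1, e2] at this
    have hcase : F = Z.face i ∨ F = Z.face j := by
      by_contra hnot
      push_neg at hnot
      exact hfij (hT.otherFace_eq hadj (Z.face_mem i) (Z.face_mem j) hF
        (e1 ▸ Z.mem₀ i) (e2 ▸ Z.mem₁ i) (e3 ▸ Z.mem₀ j) (e4 ▸ Z.mem₁ j) hu hv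
        (Ne.symm hnot.1) (Ne.symm hnot.2))
    rcases hcase with hFi | hFj
    · refine ⟨⟨i, e1, e2, hFi.symm⟩, ⟨j - 1, ?_, ?_, ?_⟩⟩
      · rw [show j - 1 + 2 = j + 1 by ring]; exact e4
      · rw [show j - 1 + 1 = j by ring]; exact e3
      · refine hT.otherFace_eq hadj (Z.face_mem (j - 1)) hF (Z.face_mem j) ?_ ?_ hu hv
          (e3 ▸ Z.mem₀ j) (e4 ▸ Z.mem₁ j) ?_ (fun h => hfij (hFi.symm.trans h))
        · have := Z.mem₁ (j - 1)
          rw [show j - 1 + 1 = j by ring] at this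
          rwa [e3] at this
        · have := Z.mem₂ (j - 1)
          rw [show j - 1 + 2 = j + 1 by ring] at this
          rwa [e4] at this
        · have := Z.face_ne (j - 1)
          rwa [show j - 1 + 1 = j by ring] at this
    · refine ⟨⟨j, e3, e4, hFj.symm⟩, ⟨i - 1, ?_, ?_, ?_⟩⟩
      · rw [show i - 1 + 2 = i + 1 by ring]; exact e2
      · rw [show i - 1 + 1 = i by ring]; exact e1
      · refine hT.otherFace_eq hadj (Z.face_mem (i - 1)) hF (Z.face_mem i) ?_ ?_ hu hv
          (e1 ▸ Z.mem₀ i) (e2 ▸ Z.mem₁ i) ?_ (fun h => hfij (h.symm.trans hFj))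
        · have := Z.mem₁ (i - 1)
          rw [show i - 1 + 1 = i by ring] at this
          rwa [e1] at this
        · have := Z.mem₂ (i - 1)
          rw [show i - 1 + 2 = i + 1 by ring] at this
          rwa [e2] at this
        · have := Z.face_ne (i - 1)
          rwa [show i - 1 + 1 = i by ring] at this
  · rintro ⟨⟨i, e1, e2, e3⟩, ⟨j, d1, d2, d3⟩⟩
    refine ⟨i, j + 1, ?_, e1, e2, d2, ?_⟩
    · intro hEq
      have hdvd := Z.cast_eq_iff.1 hEq
      have hfij : Z.face i = Z.face (j + 1) := by
        have := Z.face_per_dvd hT hdvd (j + 1)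
        rwa [show j + 1 + (i - (j + 1)) = i by ring] at this
      have hne := Z.face_ne j
      rw [d3, ← e3, hfij] at hne
      exact hne rfl
    · rw [show j + 1 + 1 = j + 2 by ring]; exact d1

lemma inO_iff_inB (hT : T.IsTriangulation) {F : Finset V} (hF : F ∈ T.faces)
    {u v w : V} (hu : u ∈ F) (hv : v ∈ F) (hw : w ∈ F)
    (huv : u ≠ v) (huw : u ≠ w) (hvw : v ≠ w) :
    (∃ i, Z.seq i = u ∧ Z.seq (i + 1) = v ∧ Z.face i = F) ↔
      (∃ j, Z.seq (j + 2) = w ∧ Z.seq (j + 1) = v ∧ Z.face j = F) := by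
  have hFt : F = {u, v, w} := hT.face_eq_triple hF huv huw hvw hu hv hw
  constructor
  · rintro ⟨i, e1, e2, e3⟩
    refine ⟨i, ?_, e2, e3⟩
    have hm : Z.seq (i + 2) ∈ F := e3 ▸ Z.mem₂ i
    rw [hFt] at hm
    simp only [Finset.mem_insert, Finset.mem_singleton] at hm
    rcases hm with h | h | h
    · exact absurd (h.trans e1.symm) (Z.seq_ne_two hT i)
    · exact absurd (h.trans e2.symm) (Ne.symm (Z.seq_ne' i))
    · exact h
  · rintro ⟨j, e1, e2, e3⟩
    refine ⟨j, ?_, e2, e3⟩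
    have hm : Z.seq j ∈ F := e3 ▸ Z.mem₀ j
    rw [hFt] at hm
    simp only [Finset.mem_insert, Finset.mem_singleton] at hm
    rcases hm with h | h | h
    · exact h
    · exact absurd (h.trans e2.symm) (Z.seq_ne j)
    · exact absurd (h.trans e1.symm).symm (Z.seq_ne_two hT j)

lemma second_symm {u v : V} (h : Z.SecondTypeEdge u v) : Z.SecondTypeEdge v u :=
  h.elim Or.inr Or.inl

end Zigzag

end PreTriangulation
namespace PreTriangulation

variable {V : Type u} [DecidableEq V] {T : PreTriangulation V}

lemma IsTriangulation.exists_third (hT : T.IsTriangulation) {G : Finset V} {a b : V}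
    (hG : G ∈ T.faces) (ha : a ∈ G) (hb : b ∈ G) (hab : a ≠ b) :
    ∃ c, c ∈ G ∧ c ≠ a ∧ c ≠ b := by
  have h3 := hT.face_card G hG
  have hmem : b ∈ G.erase a := Finset.mem_erase.2 ⟨hab.symm, hb⟩
  have hne : ((G.erase a).erase b).Nonempty := by
    rw [← Finset.card_pos, Finset.card_erase_of_mem hmem, Finset.card_erase_of_mem ha, h3]
    norm_num
  obtain ⟨c, hc⟩ := hne
  simp only [Finset.mem_erase] at hc
  exact ⟨c, hc.2.2, hc.2.1, hc.1⟩

lemma exists_zigzag_through (hT : T.IsTriangulation) {F₀ : Finset V} {u v : V}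
    (hF : F₀ ∈ T.faces) (hu : u ∈ F₀) (hv : v ∈ F₀) (huv : u ≠ v) :
    ∃ Z' : T.Zigzag, Z'.seq 0 = u ∧ Z'.seq 1 = v ∧ Z'.face 0 = F₀ := by
  classical
  have hfin : Finite V := hT.finiteVerts
  haveI : Fintype V := Fintype.ofFinite V
  let Flg := {q : (V × V) × Finset V //
    q.2 ∈ T.faces ∧ q.1.1 ∈ q.2 ∧ q.1.2 ∈ q.2 ∧ q.1.1 ≠ q.1.2}
  let Stp : Flg → Flg → Prop := fun f f' =>
    f'.1.1.1 = f.1.1.2 ∧ f'.1.1.2 ∈ f.1.2 ∧ f'.1.1.2 ≠ f.1.1.1 ∧ f'.1.2 ≠ f.1.2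
  -- the third vertex of a flag is unique
  have hthird : ∀ (G : Finset V), G ∈ T.faces → ∀ a b c c' : V, a ∈ G → b ∈ G → a ≠ b →
      c ∈ G → c ≠ a → c ≠ b → c' ∈ G → c' ≠ a → c' ≠ b → c = c' := by
    intro G hG a b c c' ha hb hab hc hca hcb hc' hc'a hc'b
    have hGt : G = {a, b, c} := hT.face_eq_triple hG hab (Ne.symm hca) (Ne.symm hcb) ha hb hc
    rw [hGt] at hc'
    simp only [Finset.mem_insert, Finset.mem_singleton] at hc'
    rcases hc' with h | h | h
    · exact absurd h hc'a
    · exact absurd h hc'b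
    · exact h.symm
  have hex : ∀ f : Flg, ∃ f', Stp f f' := by
    rintro ⟨⟨⟨a, b⟩, G⟩, hG, ha, hb, hab⟩
    obtain ⟨c, hc, hca, hcb⟩ := hT.exists_third hG ha hb hab
    have hadj : T.graph.Adj b c := hT.face_adj G hG b hb c hc (Ne.symm hcb)
    obtain ⟨G', hG', hbG', hcG', hne⟩ := hT.exists_otherFace hadj hG hb hc
    exact ⟨⟨((b, c), G'), hG', hbG', hcG', Ne.symm hcb⟩, rfl, hc, hca, hne⟩
  have hex' : ∀ f : Flg, ∃ f₀, Stp f₀ f := by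
    rintro ⟨⟨⟨b, c⟩, G'⟩, hG', hb, hc, hbc⟩
    have hadj : T.graph.Adj b c := hT.face_adj G' hG' b hb c hc hbc
    obtain ⟨G, hG, hbG, hcG, hne⟩ := hT.exists_otherFace hadj hG' hb hc
    obtain ⟨a, ha, hab, hac⟩ := hT.exists_third hG hbG hcG hbc
    refine ⟨⟨((a, b), G), hG, ha, hbG, ?_⟩, ?_, ?_, ?_, ?_⟩
    · exact hab
    · rfl
    · exact hcG
    · exact Ne.symm hac
    · exact Ne.symm hne
  have hfunc : ∀ f f₁ f₂ : Flg, Stp f f₁ → Stp f f₂ → f₁ = f₂ := by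
    rintro ⟨⟨⟨a, b⟩, G⟩, hG, ha, hb, hab⟩ ⟨⟨⟨b₁, c₁⟩, G₁⟩, hG₁, hb₁, hc₁, hbc₁⟩
      ⟨⟨⟨b₂, c₂⟩, G₂⟩, hG₂, hb₂, hc₂, hbc₂⟩ ⟨s1, s2, s3, s4⟩ ⟨t1, t2, t3, t4⟩
    simp only at s1 s2 s3 s4 t1 t2 t3 t4 hG ha hb hab hG₁ hb₁ hc₁ hbc₁ hG₂ hb₂ hc₂ hbc₂
    have hcc : c₁ = c₂ := by
      refine hthird G hG a b c₁ c₂ ha hb hab s2 s3 ?_ t2 t3 ?_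
      · rw [s1] at hbc₁; exact Ne.symm hbc₁
      · rw [t1] at hbc₂; exact Ne.symm hbc₂
    have hGG : G₁ = G₂ := by
      have hadj : T.graph.Adj b c₁ := by
        refine hT.face_adj G hG b hb c₁ s2 ?_
        rw [s1] at hbc₁; exact hbc₁
      refine hT.otherFace_eq hadj hG₁ hG₂ hG ?_ hc₁ ?_ ?_ hb s2 s4 t4
      · rw [← s1]; exact hb₁
      · rw [← t1]; exact hb₂
      · rw [hcc]; exact hc₂
    apply Subtype.ext
    simp only
    rw [s1.trans t1.symm, hcc, hGG]
  have hinj : ∀ f₁ f₂ f : Flg, Stp f₁ f → Stp f₂ f → f₁ = f₂ := by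
    rintro ⟨⟨⟨a₁, b₁⟩, G₁⟩, hG₁, ha₁, hb₁, hab₁⟩ ⟨⟨⟨a₂, b₂⟩, G₂⟩, hG₂, ha₂, hb₂, hab₂⟩
      ⟨⟨⟨b, c⟩, G'⟩, hG', hbm, hcm, hbc⟩ ⟨s1, s2, s3, s4⟩ ⟨t1, t2, t3, t4⟩
    simp only at s1 s2 s3 s4 t1 t2 t3 t4 hG₁ ha₁ hb₁ hab₁ hG₂ ha₂ hb₂ hab₂ hG' hbm hcm hbc
    have hGG : G₁ = G₂ := by
      have hadj : T.graph.Adj b c := hT.face_adj G' hG' b hbm c hcm hbc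
      refine hT.otherFace_eq hadj hG₁ hG₂ hG' ?_ s2 ?_ t2 hbm hcm (Ne.symm s4) (Ne.symm t4)
      · rw [s1]; exact hb₁
      · rw [t1]; exact hb₂
    have haa : a₁ = a₂ := by
      refine hthird G₁ hG₁ b c a₁ a₂ ?_ s2 hbc ha₁ ?_ (Ne.symm s3) ?_ ?_ (Ne.symm t3)
      · rw [s1]; exact hb₁
      · rw [s1]; exact hab₁
      · rw [hGG]; exact ha₂
      · rw [t1]; exact hab₂
    apply Subtype.ext
    simp only
    rw [haa, s1.symm.trans t1, hGG]
  choose nxt hnxt using hex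
  choose prv hprv using hex'
  have hli : Function.LeftInverse prv nxt := fun f => hinj _ _ _ (hprv (nxt f)) (hnxt f)
  have hri : Function.RightInverse prv nxt := fun f => hfunc (prv f) _ _ (hnxt (prv f)) (hprv f)
  let e : Equiv.Perm Flg := ⟨nxt, prv, hli, hri⟩
  let f₀ : Flg := ⟨((u, v), F₀), hF, hu, hv, huv⟩
  let g : ℤ → Flg := fun i => (e ^ i) f₀
  have hstep : ∀ i : ℤ, g (i + 1) = nxt (g i) := by
    intro i
    show (e ^ (i + 1)) f₀ = nxt ((e ^ i) f₀)
    rw [add_comm, zpow_add, zpow_one]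
    rfl
  have hStp : ∀ i, Stp (g i) (g (i + 1)) := fun i => by
    rw [hstep i]; exact hnxt (g i)
  let s : ℤ → V := fun i => (g i).1.1.1
  let fc : ℤ → Finset V := fun i => (g i).1.2
  have hsb : ∀ i, s (i + 1) = (g i).1.1.2 := fun i => (hStp i).1
  have hsne : ∀ i, s i ≠ s (i + 1) := by
    intro i
    rw [hsb i]
    exact (g i).2.2.2.2
  have hs0 : ∀ i, s i ∈ fc i := fun i => (g i).2.2.1
  have hs1 : ∀ i, s (i + 1) ∈ fc i := fun i => by rw [hsb i]; exact (g i).2.2.2.1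
  have hs2' : ∀ i, s (i + 2) = (g (i + 1)).1.1.2 := by
    intro i
    have := hsb (i + 1)
    rwa [show i + 1 + 1 = i + 2 by ring] at this
  have hs2 : ∀ i, s (i + 2) ∈ fc i ∧ s (i + 2) ≠ s i ∧ s (i + 2) ≠ s (i + 1) := by
    intro i
    rw [hs2' i, hsb i]
    refine ⟨(hStp i).2.1, (hStp i).2.2.1, ?_⟩
    have h := (g (i + 1)).2.2.2.2
    rw [(hStp i).1] at h
    exact Ne.symm h
  have hfne : ∀ i, fc i ≠ fc (i + 1) := fun i => Ne.symm (hStp i).2.2.2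
  have hfmem : ∀ i, fc i ∈ T.faces := fun i => (g i).2.1
  have hsub : ∀ i, ({s i, s (i + 1), s (i + 2)} : Finset V) ⊆ fc i := by
    intro i t ht
    simp only [Finset.mem_insert, Finset.mem_singleton] at ht
    rcases ht with rfl | rfl | rfl
    · exact hs0 i
    · exact hs1 i
    · exact (hs2 i).1
  have huf : ∀ (i : ℤ) (G : Finset V), G ∈ T.faces →
      ({s i, s (i + 1), s (i + 2)} : Finset V) ⊆ G → G = fc i := by
    intro i G hG hGsub
    have h1 : s i ∈ G := hGsub (by simp)
    have h2 : s (i + 1) ∈ G := hGsub (by simp)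
    have h3 : s (i + 2) ∈ G := hGsub (by simp)
    exact hT.face_eq_of hG (hfmem i) (hsne i) (Ne.symm (hs2 i).2.1) (Ne.symm (hs2 i).2.2)
      h1 h2 h3 (hs0 i) (hs1 i) (hs2 i).1
  -- periodicity
  have hm₀ : 0 < orderOf e := orderOf_pos e
  have hgper : ∀ i : ℤ, g (i + (orderOf e : ℤ)) = g i := by
    intro i
    show (e ^ (i + (orderOf e : ℤ))) f₀ = (e ^ i) f₀
    rw [zpow_add, zpow_natCast, pow_orderOf_eq_one, mul_one]
  have hsper : ∀ i : ℤ, s (i + (orderOf e : ℤ)) = s i := by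
    intro i
    show (g (i + (orderOf e : ℤ))).1.1.1 = (g i).1.1.1
    rw [hgper i]
  set N := sInf {m : ℕ | 0 < m ∧ ∀ i : ℤ, s (i + (m : ℤ)) = s i} with hN
  have hNmem : N ∈ {m : ℕ | 0 < m ∧ ∀ i : ℤ, s (i + (m : ℤ)) = s i} :=
    Nat.sInf_mem ⟨orderOf e, hm₀, hsper⟩
  obtain ⟨hN0, hNper⟩ := hNmem
  have hN3 : 3 < N := by
    by_contra hle
    push_neg at hle
    interval_cases N
    · -- N = 1
      exact hsne 0 (hNper 0).symm
    · -- N = 2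
      exact (hs2 0).2.1 (by exact_mod_cast hNper 0)
    · -- N = 3
      apply hfne 0
      have h01 : (0 : ℤ) + 1 = 1 := by norm_num
      rw [h01]
      refine huf 1 (fc 0) (hfmem 0) ?_
      intro t ht
      simp only [Finset.mem_insert, Finset.mem_singleton] at ht
      rcases ht with rfl | rfl | rfl
      · exact hs1 0
      · have h12 : s (1 + 1) = s (0 + 2) := by norm_num
        rw [h12]; exact (hs2 0).1
      · have h30 : s (1 + 2) = s 0 := by
          have := hNper 0
          norm_num at this ⊢
          exact this
        rw [h30]; exact hs0 0
  let Z' : T.Zigzag :=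
    { n := N
      three_lt_n := hN3
      seq := s
      periodic := hNper
      n_minimal := fun m hm hper' => Nat.sInf_le ⟨hm, hper'⟩
      seq_ne := hsne
      seq_adj := fun i => hT.face_adj (fc i) (hfmem i) (s i) (hs0 i) (s (i + 1)) (hs1 i) (hsne i)
      face := fc
      face_mem := hfmem
      subset_face := hsub
      face_unique := fun i G hG hGsub => huf i G hG hGsub
      face_ne := hfne }
  have hg0 : g 0 = f₀ := by
    show (e ^ (0 : ℤ)) f₀ = f₀
    rw [zpow_zero]
    rfl
  refine ⟨Z', ?_, ?_, ?_⟩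
  · show s 0 = u
    show (g 0).1.1.1 = u
    rw [hg0]
  · show s 1 = v
    have h1 : s (0 + 1) = (g 0).1.1.2 := hsb 0
    rw [show (1 : ℤ) = 0 + 1 by norm_num, h1, hg0]
  · show fc 0 = F₀
    show (g 0).1.2 = F₀
    rw [hg0]

end PreTriangulation
namespace PreTriangulation

variable {V : Type u} [DecidableEq V] {T : PreTriangulation V}

lemma pass_or_pass (hT : T.IsTriangulation) (hzk : T.ZKnotted) (Z : T.Zigzag)
    {F : Finset V} (hF : F ∈ T.faces) {u v : V} (hu : u ∈ F) (hv : v ∈ F) (huv : u ≠ v) :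
    (∃ i, Z.seq i = u ∧ Z.seq (i + 1) = v ∧ Z.face i = F) ∨
    (∃ j, Z.seq (j + 2) = u ∧ Z.seq (j + 1) = v ∧ Z.face j = F) := by
  obtain ⟨Z', h0, h1, hf0⟩ := exists_zigzag_through hT hF hu hv huv
  have hc2 : Z'.seq 2 ∈ F := by
    have := Z'.mem₂ 0
    norm_num at this
    rwa [hf0] at this
  have hcu : Z'.seq 2 ≠ u := by
    rw [← h0]
    have := Z'.seq_ne_two hT 0
    norm_num at this
    exact this
  have hcv : Z'.seq 2 ≠ v := by
    rw [← h1]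
    have := Z'.seq_ne' 0
    norm_num at this
    exact Ne.symm this
  have hE : (∃ k : ℤ, ∀ i : ℤ, Z'.seq i = Z.seq (i + k)) ∨
      (∃ k : ℤ, ∀ i : ℤ, Z'.seq i = Z.seq (k - i)) := hzk.2 Z Z'
  rcases hE with ⟨k, hk⟩ | ⟨k, hk⟩
  · left
    have e0 : Z.seq k = u := by
      have := hk 0
      rw [zero_add] at this
      rw [← this]; exact h0
    have e1 : Z.seq (k + 1) = v := by
      have := hk 1
      rw [add_comm 1 k] at this
      rw [← this]; exact h1
    have e2 : Z.seq (k + 2) = Z'.seq 2 := by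
      have := hk 2
      rw [add_comm 2 k] at this
      exact this.symm
    refine ⟨k, e0, e1, ?_⟩
    refine hT.face_eq_of (Z.face_mem k) hF (Z.seq_ne k) (Ne.symm (Z.seq_ne_two hT k))
      (Z.seq_ne' k) (Z.mem₀ k) (Z.mem₁ k) (Z.mem₂ k) ?_ ?_ ?_
    · rw [e0]; exact hu
    · rw [e1]; exact hv
    · rw [e2]; exact hc2
  · right
    have e0 : Z.seq k = u := by
      have := hk 0
      rw [sub_zero] at this
      rw [← this]; exact h0
    have e1 : Z.seq (k - 1) = v := by
      have := hk 1
      rw [← this]; exact h1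
    have e2 : Z.seq (k - 2) = Z'.seq 2 := (hk 2).symm
    refine ⟨k - 2, ?_, ?_, ?_⟩
    · rw [show k - 2 + 2 = k by ring]; exact e0
    · rw [show k - 2 + 1 = k - 1 by ring]; exact e1
    · refine hT.face_eq_of (Z.face_mem (k - 2)) hF (Z.seq_ne (k - 2))
        (Ne.symm (Z.seq_ne_two hT (k - 2))) (Z.seq_ne' (k - 2)) (Z.mem₀ (k - 2))
        (Z.mem₁ (k - 2)) (Z.mem₂ (k - 2)) ?_ ?_ ?_
      · rw [e2]; exact hc2
      · rw [show k - 2 + 1 = k - 1 by ring, e1]; exact hv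
      · rw [show k - 2 + 2 = k by ring, e0]; exact hu

end PreTriangulation
open PreTriangulation

theorem statement_0 {V : Type u} [DecidableEq V] (T : PreTriangulation V)
    (hT : T.IsTriangulation) (hz : T.ZKnotted) (Z : T.Zigzag)
    (F : Finset V) (hF : F ∈ T.faces) :
    (Z.Is112Face F ∨ Z.Is222Face F) ∧ ¬ (Z.Is112Face F ∧ Z.Is222Face F) := by
  classical
  obtain ⟨x, y, z, hxy, hxz, hyz, hFxyz⟩ := Finset.card_eq_three.1 (hT.face_card F hF)
  have hx : x ∈ F := by rw [hFxyz]; simp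
  have hy : y ∈ F := by rw [hFxyz]; simp
  have hz' : z ∈ F := by rw [hFxyz]; simp
  constructor
  · let InO : V → V → Prop := fun a b => ∃ i, Z.seq i = a ∧ Z.seq (i + 1) = b ∧ Z.face i = F
    let InB : V → V → Prop := fun a b => ∃ j, Z.seq (j + 2) = a ∧ Z.seq (j + 1) = b ∧ Z.face j = F
    have cov : ∀ a b, a ∈ F → b ∈ F → a ≠ b → InO a b ∨ InB a b := fun a b ha hb hab =>
      pass_or_pass hT hz Z hF ha hb hab
    have pt : ∀ a b, a ∈ F → b ∈ F → a ≠ b → (Z.PassesTwice a b ↔ (InO a b ∧ InB b a)) :=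
      fun a b ha hb hab => Z.passesTwice_iff hT hF ha hb hab
    have invo : ∀ a b c, a ∈ F → b ∈ F → c ∈ F → a ≠ b → a ≠ c → b ≠ c →
        (InO a b ↔ InB c b) := fun a b c ha hb hc h1 h2 h3 =>
      Z.inO_iff_inB hT hF ha hb hc h1 h2 h3
    by_cases hcr : ∃ i j : ℤ, Z.seq i = Z.seq (j + 2) ∧ Z.seq (i + 1) = Z.seq (j + 1) ∧
        Z.face i = Z.face j
    · -- the zigzag "crosses itself": all edges of F are of second type
      obtain ⟨i₀, j₀, hc1, hc2, hc3⟩ := hcr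
      have chain := Z.chainFR hT hc1 hc2 hc3
      have conv1 : ∀ a b, InO a b → InB a b := by
        rintro a b ⟨i, e1, e2, e3⟩
        refine ⟨j₀ - (i - i₀), ?_, ?_, ?_⟩
        · have h := (chain (i - i₀)).1
          rw [show i₀ + (i - i₀) = i by ring] at h
          rw [show j₀ - (i - i₀) + 2 = j₀ + 2 - (i - i₀) by ring, ← h]; exact e1
        · have h := (chain (i - i₀)).2.1
          rw [show i₀ + (i - i₀) + 1 = i + 1 by ring] at h
          rw [show j₀ - (i - i₀) + 1 = j₀ + 1 - (i - i₀) by ring, ← h]; exact e2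
        · have h := (chain (i - i₀)).2.2
          rw [show i₀ + (i - i₀) = i by ring] at h
          rw [← h]; exact e3
      have conv2 : ∀ a b, InB a b → InO a b := by
        rintro a b ⟨j, e1, e2, e3⟩
        refine ⟨i₀ + (j₀ - j), ?_, ?_, ?_⟩
        · have h := (chain (j₀ - j)).1
          rw [show j₀ + 2 - (j₀ - j) = j + 2 by ring] at h
          rw [h]; exact e1
        · have h := (chain (j₀ - j)).2.1
          rw [show j₀ + 1 - (j₀ - j) = j + 1 by ring] at h
          rw [h]; exact e2
        · have h := (chain (j₀ - j)).2.2
          rw [show j₀ - (j₀ - j) = j by ring] at h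
          rw [h]; exact e3
      have sec : ∀ a b, a ∈ F → b ∈ F → a ≠ b → Z.SecondTypeEdge a b := by
        intro a b ha hb hab
        left
        refine (pt a b ha hb hab).2 ⟨?_, ?_⟩
        · exact (cov a b ha hb hab).elim id (conv2 a b)
        · exact (cov b a hb ha (Ne.symm hab)).elim (conv1 b a) id
      right
      exact ⟨x, y, z, hFxyz, hxy, hxz, hyz, sec x y hx hy hxy, sec y z hy hz' hyz,
        sec x z hx hz' hxz⟩
    · -- the zigzag does not cross itself
      have excl : ∀ a b, InO a b → InB a b → False := by
        rintro a b ⟨i, e1, e2, e3⟩ ⟨j, d1, d2, d3⟩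
        exact hcr ⟨i, j, by rw [e1, d1], by rw [e2, d2], by rw [e3, d3]⟩
      have nb : ∀ a b, a ∈ F → b ∈ F → a ≠ b → (InB a b ↔ ¬ InO a b) := by
        intro a b ha hb hab
        exact ⟨fun hB hO => excl a b hO hB, fun hn => (cov a b ha hb hab).resolve_left hn⟩
      have A1 : InB z y ↔ InO x y := (invo x y z hx hy hz' hxy hxz hyz).symm
      have A2 : InB z x ↔ InO y x := (invo y x z hy hx hz' (Ne.symm hxy) hyz hxz).symm
      have A3 : InB x z ↔ InO y z := (invo y z x hy hz' hx hyz (Ne.symm hxy) (Ne.symm hxz)).symm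
      have E1 : InB x y ↔ ¬ InO x y := nb x y hx hy hxy
      have E2 : InB y x ↔ ¬ InO y x := nb y x hy hx (Ne.symm hxy)
      have E3 : InB y z ↔ ¬ InO y z := nb y z hy hz' hyz
      have hIzy : InO x y ↔ ¬ InO z y := A1.symm.trans (nb z y hz' hy (Ne.symm hyz))
      have hIzx : InO y x ↔ ¬ InO z x := A2.symm.trans (nb z x hz' hx (Ne.symm hxz))
      have hIxz : InO y z ↔ ¬ InO x z := A3.symm.trans (nb x z hx hz' hxz)
      have SxyI : Z.SecondTypeEdge x y ↔ ((InO x y ∧ ¬ InO y x) ∨ (InO y x ∧ ¬ InO x y)) := by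
        have h0 : Z.SecondTypeEdge x y ↔ (Z.PassesTwice x y ∨ Z.PassesTwice y x) := Iff.rfl
        rw [h0, pt x y hx hy hxy, pt y x hy hx (Ne.symm hxy), E2, E1]
      have SyzI : Z.SecondTypeEdge y z ↔ ((InO y z ∧ InO x y) ∨ (InO z y ∧ ¬ InO y z)) := by
        have h0 : Z.SecondTypeEdge y z ↔ (Z.PassesTwice y z ∨ Z.PassesTwice z y) := Iff.rfl
        rw [h0, pt y z hy hz' hyz, pt z y hz' hy (Ne.symm hyz), A1, E3]
      have SxzI : Z.SecondTypeEdge x z ↔ ((InO x z ∧ InO y x) ∨ (InO z x ∧ InO y z)) := by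
        have h0 : Z.SecondTypeEdge x z ↔ (Z.PassesTwice x z ∨ Z.PassesTwice z x) := Iff.rfl
        rw [h0, pt x z hx hz' hxz, pt z x hz' hx (Ne.symm hxz), A2, A3]
      have hF2 : F = {y, x, z} := by
        rw [hFxyz, Finset.insert_comm]
      have hF3 : F = {z, x, y} := by
        rw [hFxyz, Finset.pair_comm y z, Finset.insert_comm x z]
      by_cases hp : InO x y <;> by_cases hq : InO y x <;> by_cases hr : InO y z
      · -- TTT : only {y,z} of second type
        left
        refine ⟨x, y, z, hFxyz, hxy, hxz, hyz, ?_, ?_, ?_⟩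
        · rw [SyzI]; exact Or.inl ⟨hr, hp⟩
        · rw [SxyI]; rintro (⟨h1, h2⟩ | ⟨h1, h2⟩)
          · exact h2 hq
          · exact h2 hp
        · rw [SxzI]; rintro (⟨h1, h2⟩ | ⟨h1, h2⟩)
          · exact hIxz.1 hr h1
          · exact hIzx.1 hq h1
      · -- TTF : only {x,z} of second type
        left
        refine ⟨y, x, z, hF2, Ne.symm hxy, hyz, hxz, ?_, ?_, ?_⟩
        · rw [SxzI]
          exact Or.inl ⟨by by_contra hc; exact hr (hIxz.2 hc), hq⟩
        · intro h
          have h' := Z.second_symm h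
          rw [SxyI] at h'
          rcases h' with ⟨h1, h2⟩ | ⟨h1, h2⟩
          · exact h2 hq
          · exact h2 hp
        · rw [SyzI]; rintro (⟨h1, h2⟩ | ⟨h1, h2⟩)
          · exact hr h1
          · exact hIzy.1 hp h1
      · -- TFT : all of second type
        right
        refine ⟨x, y, z, hFxyz, hxy, hxz, hyz, ?_, ?_, ?_⟩
        · rw [SxyI]; exact Or.inl ⟨hp, hq⟩
        · rw [SyzI]; exact Or.inl ⟨hr, hp⟩
        · rw [SxzI]
          exact Or.inr ⟨by by_contra hc; exact hq (hIzx.2 hc), hr⟩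
      · -- TFF : only {x,y} of second type
        left
        refine ⟨z, x, y, hF3, Ne.symm hxz, Ne.symm hyz, hxy, ?_, ?_, ?_⟩
        · rw [SxyI]; exact Or.inl ⟨hp, hq⟩
        · intro h
          have h' := Z.second_symm h
          rw [SxzI] at h'
          rcases h' with ⟨h1, h2⟩ | ⟨h1, h2⟩
          · exact hq h2
          · exact hr h2
        · intro h
          have h' := Z.second_symm h
          rw [SyzI] at h'
          rcases h' with ⟨h1, h2⟩ | ⟨h1, h2⟩
          · exact hr h1
          · exact hIzy.1 hp h1
      · -- FTT : only {x,y} of second type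
        left
        refine ⟨z, x, y, hF3, Ne.symm hxz, Ne.symm hyz, hxy, ?_, ?_, ?_⟩
        · rw [SxyI]; exact Or.inr ⟨hq, hp⟩
        · intro h
          have h' := Z.second_symm h
          rw [SxzI] at h'
          rcases h' with ⟨h1, h2⟩ | ⟨h1, h2⟩
          · exact hIxz.1 hr h1
          · exact hIzx.1 hq h1
        · intro h
          have h' := Z.second_symm h
          rw [SyzI] at h'
          rcases h' with ⟨h1, h2⟩ | ⟨h1, h2⟩
          · exact hp h2
          · exact h2 hr
      · -- FTF : all of second type
        right
        refine ⟨x, y, z, hFxyz, hxy, hxz, hyz, ?_, ?_, ?_⟩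
        · rw [SxyI]; exact Or.inr ⟨hq, hp⟩
        · rw [SyzI]
          exact Or.inr ⟨by by_contra hc; exact hp (hIzy.2 hc), hr⟩
        · rw [SxzI]
          exact Or.inl ⟨by by_contra hc; exact hr (hIxz.2 hc), hq⟩
      · -- FFT : only {x,z} of second type
        left
        refine ⟨y, x, z, hF2, Ne.symm hxy, hyz, hxz, ?_, ?_, ?_⟩
        · rw [SxzI]
          exact Or.inr ⟨by by_contra hc; exact hq (hIzx.2 hc), hr⟩
        · intro h
          have h' := Z.second_symm h
          rw [SxyI] at h'
          rcases h' with ⟨h1, h2⟩ | ⟨h1, h2⟩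
          · exact hp h1
          · exact hq h1
        · rw [SyzI]; rintro (⟨h1, h2⟩ | ⟨h1, h2⟩)
          · exact hp h2
          · exact h2 hr
      · -- FFF : only {y,z} of second type
        left
        refine ⟨x, y, z, hFxyz, hxy, hxz, hyz, ?_, ?_, ?_⟩
        · rw [SyzI]
          exact Or.inr ⟨by by_contra hc; exact hp (hIzy.2 hc), hr⟩
        · rw [SxyI]; rintro (⟨h1, h2⟩ | ⟨h1, h2⟩)
          · exact hp h1
          · exact hq h1
        · rw [SxzI]; rintro (⟨h1, h2⟩ | ⟨h1, h2⟩)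
          · exact hq h2
          · exact hr h2
  · rintro ⟨⟨a, b, c, hFabc, hab, hac, hbc, hSbc, hnab, hnac⟩,
      ⟨a', b', c', hF', h1', h2', h3', hs1, hs2, hs3⟩⟩
    have hall : ∀ s t : V, s ∈ F → t ∈ F → s ≠ t → Z.SecondTypeEdge s t := by
      intro s t hs ht hst
      rw [hF'] at hs ht
      simp only [Finset.mem_insert, Finset.mem_singleton] at hs ht
      rcases hs with rfl | rfl | rfl <;> rcases ht with rfl | rfl | rfl <;>
        first
          | exact absurd rfl hst
          | exact hs1
          | exact hs2
          | exact hs3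
          | exact Z.second_symm hs1
          | exact Z.second_symm hs2
          | exact Z.second_symm hs3
    exact hnab (hall a b (by rw [hFabc]; simp) (by rw [hFabc]; simp) hab)
end

section
/- If n ≥ 4 is even, then the bipyramid BP_n is not z-knotted, i.e., it has at least two zigzags up to cyclic shift and reversal. -/
universe u v

namespace PreTriangulation

lemma intCast_emod_zmod (n : ℕ) (a : ℤ) : ((a % (n:ℤ) : ℤ) : ZMod n) = (a : ZMod n) := by
  conv_rhs => rw [← Int.mul_ediv_add_emod a n]
  push_cast
  simp

lemma bpZigSeq_eval (n : ℕ) (m : ℕ) (hnm : n = 2 * m) (hm : 0 < m) (c : ZMod n)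
    (i q r : ℤ) (hi : i = 3 * q + r) (h0 : 0 ≤ r) (h2 : r < 3) :
    bpZigSeq n c i = if r = 0 then Sum.inl (decide (q % 2 = 0))
      else Sum.inr (2 * (q : ZMod n) + (if r = 1 then 0 else 1) + c) := by
  have hn : 0 < n := by omega
  unfold bpZigSeq
  set j : ℕ := (i % (3 * (n : ℤ))).toNat with hj
  have h3n : (0:ℤ) < 3 * n := by positivity
  have hjz : (j : ℤ) = i % (3 * n) := Int.toNat_of_nonneg (Int.emod_nonneg _ (by omega))
  have hA : q % (n:ℤ) = q % (n:ℤ) := rfl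
  have hA0 : 0 ≤ q % (n:ℤ) := Int.emod_nonneg _ (by omega)
  have hAn : q % (n:ℤ) < n := Int.emod_lt_of_pos _ (by exact_mod_cast hn)
  obtain ⟨B, hB⟩ : ∃ B : ℤ, q = n * B + q % (n:ℤ) :=
    ⟨q / n, by have := Int.mul_ediv_add_emod q (n:ℤ); omega⟩
  have key : (j : ℤ) = 3 * (q % (n:ℤ)) + r := by
    rw [hjz]
    have : i = (3 * (q % (n:ℤ)) + r) + (3 * n) * B := by rw [hi]; nlinarith [hB]
    rw [this, Int.add_mul_emod_self_left, Int.emod_eq_of_lt (by omega) (by omega)]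
  obtain ⟨m', hm'⟩ : ∃ m' : ℤ, (n:ℤ) = 2 * m' := ⟨m, by exact_mod_cast hnm⟩
  obtain ⟨C, hC⟩ : ∃ C : ℤ, q = 2 * C + q % (n:ℤ) := ⟨m' * B, by linear_combination hB + B * hm'⟩
  have hjm : (↑(j % 3) : ℤ) = r := by push_cast; omega
  have hjd : (↑(j / 3) : ℤ) = q % (n:ℤ) := by push_cast; omega
  have hcast : ((j / 3 : ℕ) : ZMod n) = (q : ZMod n) := by
    have h1 : ((j / 3 : ℕ) : ZMod n) = (((j / 3 : ℕ) : ℤ) : ZMod n) := (Int.cast_natCast _).symm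
    rw [h1, hjd, intCast_emod_zmod]
  by_cases hr : r = 0
  · have hj3 : j % 3 = 0 := by omega
    simp only [hj3, hr, if_pos, if_true, reduceIte]
    congr 1
    rw [decide_eq_decide]
    omega
  · have hj3 : ¬ (j % 3 = 0) := by omega
    rw [if_neg hj3, if_neg hr]
    by_cases hr1 : r = 1
    · have : j % 3 = 1 := by omega
      simp only [this, hr1, reduceIte]
      congr 1
      push_cast [hcast]
      ring
    · have : j % 3 ≠ 1 := by omega
      simp only [this, hr1, reduceIte]
      congr 1
      push_cast [hcast]
      ring

end PreTriangulation
namespace PreTriangulation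

section BPZ

variable (n : ℕ) (c : ZMod n)

lemma bpZigSeq_at0 (m : ℕ) (hnm : n = 2 * m) (hm : 0 < m) (q : ℤ) : bpZigSeq n c (3 * q) = Sum.inl (decide (q % 2 = 0)) := by
  rw [bpZigSeq_eval n m hnm hm c (3 * q) q 0 (by ring) le_rfl (by norm_num)]
  simp

lemma bpZigSeq_at1 (m : ℕ) (hnm : n = 2 * m) (hm : 0 < m) (q : ℤ) : bpZigSeq n c (3 * q + 1) = Sum.inr (2 * (q : ZMod n) + c) := by
  rw [bpZigSeq_eval n m hnm hm c (3 * q + 1) q 1 rfl (by norm_num) (by norm_num)]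
  norm_num

lemma bpZigSeq_at2 (m : ℕ) (hnm : n = 2 * m) (hm : 0 < m) (q : ℤ) : bpZigSeq n c (3 * q + 2) = Sum.inr (2 * (q : ZMod n) + 1 + c) := by
  rw [bpZigSeq_eval n m hnm hm c (3 * q + 2) q 2 rfl (by norm_num) (by norm_num)]
  norm_num

end BPZ

lemma apex_flip (q : ℤ) : decide (q % 2 = 0) ≠ decide ((q + 1) % 2 = 0) := by
  intro h; rw [decide_eq_decide] at h; omega

lemma zmod_one_ne (n : ℕ) (h : 2 ≤ n) : (1 : ZMod n) ≠ 0 := by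
  intro h'
  have : n ∣ 1 := by
    have := (ZMod.natCast_eq_zero_iff 1 n).mp (by exact_mod_cast h')
    exact this
  have := Nat.le_of_dvd (by norm_num) this
  omega

lemma zmod_two_ne (n : ℕ) (h : 3 ≤ n) : (2 : ZMod n) ≠ 0 := by
  intro h'
  have : n ∣ 2 := by
    have := (ZMod.natCast_eq_zero_iff 2 n).mp (by exact_mod_cast h')
    exact this
  have := Nat.le_of_dvd (by norm_num) this
  omega

lemma bp_face_eq (n : ℕ) (hn : 4 ≤ n) (s : Bool) (u : ZMod n)
    (G : Finset (Bool ⊕ ZMod n)) (hG : G ∈ (bp n).faces)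
    (h1 : Sum.inl s ∈ G) (h2 : Sum.inr u ∈ G) (h3 : Sum.inr (u + 1) ∈ G) :
    G = {Sum.inl s, Sum.inr u, Sum.inr (u + 1)} := by
  have one_ne := zmod_one_ne n (by omega)
  have two_ne := zmod_two_ne n (by omega)
  obtain ⟨s', w, rfl⟩ := hG
  simp only [Finset.mem_insert, Finset.mem_singleton, Sum.inl.injEq, Sum.inr.injEq,
    reduceCtorEq, false_or, or_false] at h1 h2 h3
  subst h1
  rcases h2 with rfl | h2
  · rfl
  · rcases h3 with h3 | h3
    · exact absurd (show (2 : ZMod n) = 0 by linear_combination h3 - h2) two_ne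
    · exact absurd (show (1 : ZMod n) = 0 by linear_combination h3 - h2) one_ne

/-- The face function of the zigzag. -/
def bpZigFace (n : ℕ) (c : ZMod n) (i : ℤ) : Finset (Bool ⊕ ZMod n) :=
  if i % 3 = 0 then
    {Sum.inl (decide (i / 3 % 2 = 0)), Sum.inr (2 * ((i / 3 : ℤ) : ZMod n) + c),
      Sum.inr (2 * ((i / 3 : ℤ) : ZMod n) + 1 + c)}
  else if i % 3 = 1 then
    {Sum.inl (decide ((i / 3 + 1) % 2 = 0)), Sum.inr (2 * ((i / 3 : ℤ) : ZMod n) + c),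
      Sum.inr (2 * ((i / 3 : ℤ) : ZMod n) + 1 + c)}
  else
    {Sum.inl (decide ((i / 3 + 1) % 2 = 0)), Sum.inr (2 * ((i / 3 : ℤ) : ZMod n) + 1 + c),
      Sum.inr (2 * ((i / 3 : ℤ) : ZMod n) + 1 + c + 1)}

lemma bpZigFace_at0 (n : ℕ) (c : ZMod n) (q : ℤ) :
    bpZigFace n c (3 * q) = {Sum.inl (decide (q % 2 = 0)), Sum.inr (2 * (q : ZMod n) + c),
      Sum.inr (2 * (q : ZMod n) + 1 + c)} := by
  have h1 : (3 * q) % 3 = 0 := by omega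
  have h2 : (3 * q) / 3 = q := by omega
  rw [bpZigFace, h2, if_pos h1]

lemma bpZigFace_at1 (n : ℕ) (c : ZMod n) (q : ℤ) :
    bpZigFace n c (3 * q + 1) = {Sum.inl (decide ((q + 1) % 2 = 0)),
      Sum.inr (2 * (q : ZMod n) + c), Sum.inr (2 * (q : ZMod n) + 1 + c)} := by
  have h1 : (3 * q + 1) % 3 = 1 := by omega
  have h2 : (3 * q + 1) / 3 = q := by omega
  rw [bpZigFace, h2, if_neg (by omega), if_pos h1]

lemma bpZigFace_at2 (n : ℕ) (c : ZMod n) (q : ℤ) :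
    bpZigFace n c (3 * q + 2) = {Sum.inl (decide ((q + 1) % 2 = 0)),
      Sum.inr (2 * (q : ZMod n) + 1 + c), Sum.inr (2 * (q : ZMod n) + 1 + c + 1)} := by
  have h1 : (3 * q + 2) % 3 = 2 := by omega
  have h2 : (3 * q + 2) / 3 = q := by omega
  rw [bpZigFace, h2, if_neg (by omega), if_neg (by omega)]

end PreTriangulation
namespace PreTriangulation

/-- Length parameter: the zigzag has length `3 * bpK n`. -/
def bpK (n : ℕ) : ℕ := if n % 4 = 0 then n / 2 else n

lemma bpK_pos (n : ℕ) (h4 : 4 ≤ n) : 2 ≤ bpK n := by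
  unfold bpK; split <;> omega

lemma bpK_even (n : ℕ) (he : n % 2 = 0) : bpK n % 2 = 0 := by
  unfold bpK; split <;> omega

lemma bpK_dvd (n : ℕ) (he : n % 2 = 0) : n ∣ 2 * bpK n := by
  unfold bpK; split
  · exact ⟨1, by omega⟩
  · exact ⟨2, by ring⟩

lemma bpK_min (n : ℕ) (h4 : 4 ≤ n) (he : n % 2 = 0) (q : ℤ) (hq : 0 < q)
    (h2 : q % 2 = 0) (hn : (n : ℤ) ∣ 2 * q) : (bpK n : ℤ) ≤ q := by
  have hn4 : (4 : ℤ) ≤ (n : ℤ) := by exact_mod_cast h4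
  obtain ⟨s, hs⟩ := hn
  have hs1 : 1 ≤ s := by nlinarith
  unfold bpK
  by_cases h : n % 4 = 0
  · rw [if_pos h]
    have h2q : (n : ℤ) ≤ 2 * q := by nlinarith
    have : ((n / 2 : ℕ) : ℤ) = (n : ℤ) / 2 := by
      omega
    omega
  · rw [if_neg h]
    have hmod : n % 4 = 2 := by omega
    obtain ⟨v, hv⟩ : ∃ v : ℕ, n = 4 * v + 2 := ⟨n / 4, by omega⟩
    have hvz : (n : ℤ) = 4 * (v : ℤ) + 2 := by exact_mod_cast hv
    obtain ⟨u, hu⟩ : ∃ u : ℤ, q = 2 * u := ⟨q / 2, by omega⟩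
    have key : 4 * ((v : ℤ) * s) + 2 * s = 4 * u := by linear_combination 2 * hu - hs - s * hvz
    obtain ⟨w, hw⟩ : ∃ w : ℤ, s = 2 * w := ⟨u - v * s, by linarith⟩
    have h2q : 2 * q = 2 * ((n : ℤ) * w) := by linear_combination hs + (n : ℤ) * hw
    have hq' : q = (n : ℤ) * w := by linarith
    have hw1 : 1 ≤ w := by omega
    nlinarith

end PreTriangulation
namespace PreTriangulation

section Fields

variable (n : ℕ) (h4 : 4 ≤ n) (he : n % 2 = 0) (c : ZMod n)

include h4 he

lemma bpZig_periodic : ∀ i : ℤ, bpZigSeq n c (i + ((3 * bpK n : ℕ) : ℤ)) = bpZigSeq n c i := by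
  intro i
  have hm : 0 < n / 2 := by omega
  have hnm : n = 2 * (n / 2) := by omega
  have hK2 : n ∣ 2 * bpK n := bpK_dvd n he
  have hKe : bpK n % 2 = 0 := bpK_even n he
  have hKz : (2 : ZMod n) * ((bpK n : ℕ) : ZMod n) = 0 := by
    have : ((2 * bpK n : ℕ) : ZMod n) = 0 := (ZMod.natCast_eq_zero_iff _ _).mpr hK2
    push_cast at this
    exact this
  have hKi : ((bpK n : ℕ) : ℤ) % 2 = 0 := by omega
  set q := i / 3 with hq
  have h3 : i % 3 = 0 ∨ i % 3 = 1 ∨ i % 3 = 2 := by omega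
  obtain h | h | h := h3
  · have hi : i = 3 * q := by omega
    rw [hi, show 3 * q + ((3 * bpK n : ℕ) : ℤ) = 3 * (q + ((bpK n : ℕ) : ℤ)) by push_cast; ring,
      bpZigSeq_at0 n c (n / 2) hnm hm, bpZigSeq_at0 n c (n / 2) hnm hm]
    congr 1
    rw [decide_eq_decide]
    omega
  · have hi : i = 3 * q + 1 := by omega
    rw [hi, show 3 * q + 1 + ((3 * bpK n : ℕ) : ℤ) = 3 * (q + ((bpK n : ℕ) : ℤ)) + 1 by
        push_cast; ring,
      bpZigSeq_at1 n c (n / 2) hnm hm, bpZigSeq_at1 n c (n / 2) hnm hm]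
    congr 1
    push_cast
    linear_combination hKz
  · have hi : i = 3 * q + 2 := by omega
    rw [hi, show 3 * q + 2 + ((3 * bpK n : ℕ) : ℤ) = 3 * (q + ((bpK n : ℕ) : ℤ)) + 2 by
        push_cast; ring,
      bpZigSeq_at2 n c (n / 2) hnm hm, bpZigSeq_at2 n c (n / 2) hnm hm]
    congr 1
    push_cast
    linear_combination hKz

lemma bpZig_minimal : ∀ mm : ℕ, 0 < mm → (∀ i : ℤ, bpZigSeq n c (i + (mm : ℤ)) = bpZigSeq n c i) →
    3 * bpK n ≤ mm := by
  intro mm hmm hper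
  have hm : 0 < n / 2 := by omega
  have hnm : n = 2 * (n / 2) := by omega
  have e0 : bpZigSeq n c 0 = Sum.inl true := by
    have := bpZigSeq_at0 n c (n / 2) hnm hm 0
    norm_num at this
    exact this
  have e1 : bpZigSeq n c 1 = Sum.inr c := by
    have := bpZigSeq_at1 n c (n / 2) hnm hm 0
    norm_num at this
    exact this
  have h0 := hper 0
  rw [zero_add, e0] at h0
  set q := (mm : ℤ) / 3 with hq
  have h3 : (mm : ℤ) % 3 = 0 ∨ (mm : ℤ) % 3 = 1 ∨ (mm : ℤ) % 3 = 2 := by omega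
  obtain h | h | h := h3
  · have hmq : (mm : ℤ) = 3 * q := by omega
    rw [hmq, bpZigSeq_at0 n c (n / 2) hnm hm] at h0
    have hpar : q % 2 = 0 := by
      have := Sum.inl.inj h0
      simpa using this
    have h1 := hper 1
    rw [show (1 : ℤ) + (mm : ℤ) = 3 * q + 1 by omega,
      bpZigSeq_at1 n c (n / 2) hnm hm, e1] at h1
    have heq : 2 * (q : ZMod n) + c = c := Sum.inr.inj h1
    have h2q : ((2 * q : ℤ) : ZMod n) = 0 := by push_cast; linear_combination heq
    have hdvd : (n : ℤ) ∣ 2 * q := (ZMod.intCast_zmod_eq_zero_iff_dvd _ n).mp h2q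
    have hqpos : 0 < q := by omega
    have := bpK_min n h4 he q hqpos hpar hdvd
    omega
  · have hmq : (mm : ℤ) = 3 * q + 1 := by omega
    rw [hmq, bpZigSeq_at1 n c (n / 2) hnm hm] at h0
    exact absurd h0 (by simp)
  · have hmq : (mm : ℤ) = 3 * q + 2 := by omega
    rw [hmq, bpZigSeq_at2 n c (n / 2) hnm hm] at h0
    exact absurd h0 (by simp)

lemma bpZig_seq_ne : ∀ i : ℤ, bpZigSeq n c i ≠ bpZigSeq n c (i + 1) := by
  intro i
  have hm : 0 < n / 2 := by omega
  have hnm : n = 2 * (n / 2) := by omega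
  have one_ne := zmod_one_ne n (by omega)
  set q := i / 3 with hq
  have h3 : i % 3 = 0 ∨ i % 3 = 1 ∨ i % 3 = 2 := by omega
  obtain h | h | h := h3
  · have hi : i = 3 * q := by omega
    rw [hi, bpZigSeq_at0 n c (n / 2) hnm hm, bpZigSeq_at1 n c (n / 2) hnm hm]
    simp
  · have hi : i = 3 * q + 1 := by omega
    rw [hi, show 3 * q + 1 + 1 = 3 * q + 2 by ring,
      bpZigSeq_at1 n c (n / 2) hnm hm, bpZigSeq_at2 n c (n / 2) hnm hm]
    simp only [ne_eq, Sum.inr.injEq]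
    intro hEq
    exact one_ne (by linear_combination -hEq)
  · have hi : i = 3 * q + 2 := by omega
    rw [hi, show 3 * q + 2 + 1 = 3 * (q + 1) by ring,
      bpZigSeq_at2 n c (n / 2) hnm hm, bpZigSeq_at0 n c (n / 2) hnm hm]
    simp

lemma bpZig_seq_adj : ∀ i : ℤ, (bp n).graph.Adj (bpZigSeq n c i) (bpZigSeq n c (i + 1)) := by
  intro i
  have hm : 0 < n / 2 := by omega
  have hnm : n = 2 * (n / 2) := by omega
  have one_ne := zmod_one_ne n (by omega)
  set q := i / 3 with hq
  have h3 : i % 3 = 0 ∨ i % 3 = 1 ∨ i % 3 = 2 := by omega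
  obtain h | h | h := h3
  · have hi : i = 3 * q := by omega
    rw [hi, bpZigSeq_at0 n c (n / 2) hnm hm, bpZigSeq_at1 n c (n / 2) hnm hm]
    exact trivial
  · have hi : i = 3 * q + 1 := by omega
    rw [hi, show 3 * q + 1 + 1 = 3 * q + 2 by ring,
      bpZigSeq_at1 n c (n / 2) hnm hm, bpZigSeq_at2 n c (n / 2) hnm hm]
    exact ⟨fun hEq => one_ne (by linear_combination -hEq), Or.inl (by ring)⟩
  · have hi : i = 3 * q + 2 := by omega
    rw [hi, show 3 * q + 2 + 1 = 3 * (q + 1) by ring,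
      bpZigSeq_at2 n c (n / 2) hnm hm, bpZigSeq_at0 n c (n / 2) hnm hm]
    exact trivial

end Fields

end PreTriangulation
namespace PreTriangulation

section Fields2

variable (n : ℕ) (h4 : 4 ≤ n) (he : n % 2 = 0) (c : ZMod n)

include h4 he

lemma bpZig_face_mem : ∀ i : ℤ, bpZigFace n c i ∈ (bp n).faces := by
  intro i
  set q := i / 3 with hq
  have h3 : i % 3 = 0 ∨ i % 3 = 1 ∨ i % 3 = 2 := by omega
  obtain h | h | h := h3
  · have hi : i = 3 * q := by omega
    rw [hi, bpZigFace_at0]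
    exact ⟨decide (q % 2 = 0), 2 * (q : ZMod n) + c,
      by rw [show (2 * (q : ZMod n) + 1 + c) = 2 * (q : ZMod n) + c + 1 by ring]⟩
  · have hi : i = 3 * q + 1 := by omega
    rw [hi, bpZigFace_at1]
    exact ⟨decide ((q + 1) % 2 = 0), 2 * (q : ZMod n) + c,
      by rw [show (2 * (q : ZMod n) + 1 + c) = 2 * (q : ZMod n) + c + 1 by ring]⟩
  · have hi : i = 3 * q + 2 := by omega
    rw [hi, bpZigFace_at2]
    exact ⟨decide ((q + 1) % 2 = 0), 2 * (q : ZMod n) + 1 + c, rfl⟩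

lemma bpZig_subset_face : ∀ i : ℤ,
    ({bpZigSeq n c i, bpZigSeq n c (i + 1), bpZigSeq n c (i + 2)} : Finset (Bool ⊕ ZMod n)) ⊆
      bpZigFace n c i := by
  intro i
  have hm : 0 < n / 2 := by omega
  have hnm : n = 2 * (n / 2) := by omega
  set q := i / 3 with hq
  have h3 : i % 3 = 0 ∨ i % 3 = 1 ∨ i % 3 = 2 := by omega
  obtain h | h | h := h3
  · have hi : i = 3 * q := by omega
    rw [hi, bpZigSeq_at0 n c (n / 2) hnm hm, bpZigSeq_at1 n c (n / 2) hnm hm,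
      bpZigSeq_at2 n c (n / 2) hnm hm, bpZigFace_at0]
  · have hi : i = 3 * q + 1 := by omega
    rw [hi, show 3 * q + 1 + 1 = 3 * q + 2 by ring, show 3 * q + 1 + 2 = 3 * (q + 1) by ring,
      bpZigSeq_at1 n c (n / 2) hnm hm, bpZigSeq_at2 n c (n / 2) hnm hm,
      bpZigSeq_at0 n c (n / 2) hnm hm, bpZigFace_at1]
    intro x hx
    simp only [Finset.mem_insert, Finset.mem_singleton] at hx ⊢
    tauto
  · have hi : i = 3 * q + 2 := by omega
    rw [hi, show 3 * q + 2 + 1 = 3 * (q + 1) by ring, show 3 * q + 2 + 2 = 3 * (q + 1) + 1 by ring,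
      bpZigSeq_at2 n c (n / 2) hnm hm, bpZigSeq_at0 n c (n / 2) hnm hm,
      bpZigSeq_at1 n c (n / 2) hnm hm, bpZigFace_at2,
      show (2 * ((q + 1 : ℤ) : ZMod n) + c) = 2 * (q : ZMod n) + 1 + c + 1 by push_cast; ring]
    intro x hx
    simp only [Finset.mem_insert, Finset.mem_singleton] at hx ⊢
    tauto

lemma bpZig_face_unique : ∀ i : ℤ, ∀ G ∈ (bp n).faces,
    ({bpZigSeq n c i, bpZigSeq n c (i + 1), bpZigSeq n c (i + 2)} : Finset (Bool ⊕ ZMod n)) ⊆ G →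
      G = bpZigFace n c i := by
  intro i G hG hsub
  have hm : 0 < n / 2 := by omega
  have hnm : n = 2 * (n / 2) := by omega
  set q := i / 3 with hq
  have h3 : i % 3 = 0 ∨ i % 3 = 1 ∨ i % 3 = 2 := by omega
  obtain h | h | h := h3
  · have hi : i = 3 * q := by omega
    rw [hi] at hsub ⊢
    rw [bpZigSeq_at0 n c (n / 2) hnm hm, bpZigSeq_at1 n c (n / 2) hnm hm,
      bpZigSeq_at2 n c (n / 2) hnm hm] at hsub
    have h1 : Sum.inl (decide (q % 2 = 0)) ∈ G := hsub (by simp)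
    have h2 : Sum.inr (2 * (q : ZMod n) + c) ∈ G := hsub (by simp)
    have h3' : Sum.inr (2 * (q : ZMod n) + c + 1) ∈ G := hsub (by
      rw [show (2 * (q : ZMod n) + c + 1) = 2 * (q : ZMod n) + 1 + c by ring]; simp)
    rw [bpZigFace_at0, bp_face_eq n h4 _ _ G hG h1 h2 h3',
      show (2 * (q : ZMod n) + 1 + c) = 2 * (q : ZMod n) + c + 1 by ring]
  · have hi : i = 3 * q + 1 := by omega
    rw [hi] at hsub ⊢
    rw [show 3 * q + 1 + 1 = 3 * q + 2 by ring, show 3 * q + 1 + 2 = 3 * (q + 1) by ring,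
      bpZigSeq_at1 n c (n / 2) hnm hm, bpZigSeq_at2 n c (n / 2) hnm hm,
      bpZigSeq_at0 n c (n / 2) hnm hm] at hsub
    have h1 : Sum.inl (decide ((q + 1) % 2 = 0)) ∈ G := hsub (by simp)
    have h2 : Sum.inr (2 * (q : ZMod n) + c) ∈ G := hsub (by simp)
    have h3' : Sum.inr (2 * (q : ZMod n) + c + 1) ∈ G := hsub (by
      rw [show (2 * (q : ZMod n) + c + 1) = 2 * (q : ZMod n) + 1 + c by ring]; simp)
    rw [bpZigFace_at1, bp_face_eq n h4 _ _ G hG h1 h2 h3',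
      show (2 * (q : ZMod n) + 1 + c) = 2 * (q : ZMod n) + c + 1 by ring]
  · have hi : i = 3 * q + 2 := by omega
    rw [hi] at hsub ⊢
    rw [show 3 * q + 2 + 1 = 3 * (q + 1) by ring, show 3 * q + 2 + 2 = 3 * (q + 1) + 1 by ring,
      bpZigSeq_at2 n c (n / 2) hnm hm, bpZigSeq_at0 n c (n / 2) hnm hm,
      bpZigSeq_at1 n c (n / 2) hnm hm] at hsub
    have h1 : Sum.inl (decide ((q + 1) % 2 = 0)) ∈ G := hsub (by simp)
    have h2 : Sum.inr (2 * (q : ZMod n) + 1 + c) ∈ G := hsub (by simp)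
    have h3' : Sum.inr (2 * (q : ZMod n) + 1 + c + 1) ∈ G := hsub (by
      rw [show (2 * (q : ZMod n) + 1 + c + 1) = 2 * ((q + 1 : ℤ) : ZMod n) + c by
        push_cast; ring]; simp)
    rw [bpZigFace_at2]
    exact bp_face_eq n h4 _ _ G hG h1 h2 h3'

lemma bpZig_face_ne : ∀ i : ℤ, bpZigFace n c i ≠ bpZigFace n c (i + 1) := by
  intro i
  have one_ne := zmod_one_ne n (by omega)
  have two_ne := zmod_two_ne n (by omega)
  set q := i / 3 with hq
  have h3 : i % 3 = 0 ∨ i % 3 = 1 ∨ i % 3 = 2 := by omega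
  obtain h | h | h := h3
  · have hi : i = 3 * q := by omega
    rw [hi, bpZigFace_at0, bpZigFace_at1]
    intro hEq
    have hmem : (Sum.inl (decide (q % 2 = 0)) : Bool ⊕ ZMod n) ∈
        ({Sum.inl (decide ((q + 1) % 2 = 0)), Sum.inr (2 * (q : ZMod n) + c),
          Sum.inr (2 * (q : ZMod n) + 1 + c)} : Finset (Bool ⊕ ZMod n)) :=
      hEq ▸ Finset.mem_insert_self _ _
    simp only [Finset.mem_insert, Finset.mem_singleton, Sum.inl.injEq, reduceCtorEq,
      or_false] at hmem
    exact apex_flip q hmem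
  · have hi : i = 3 * q + 1 := by omega
    rw [hi, show 3 * q + 1 + 1 = 3 * q + 2 by ring, bpZigFace_at1, bpZigFace_at2]
    intro hEq
    have hmem : (Sum.inr (2 * (q : ZMod n) + c) : Bool ⊕ ZMod n) ∈
        ({Sum.inl (decide ((q + 1) % 2 = 0)), Sum.inr (2 * (q : ZMod n) + 1 + c),
          Sum.inr (2 * (q : ZMod n) + 1 + c + 1)} : Finset (Bool ⊕ ZMod n)) :=
      hEq ▸ (by simp)
    simp only [Finset.mem_insert, Finset.mem_singleton, Sum.inr.injEq, reduceCtorEq,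
      false_or] at hmem
    rcases hmem with hh | hh
    · exact one_ne (by linear_combination -hh)
    · exact two_ne (by linear_combination -hh)
  · have hi : i = 3 * q + 2 := by omega
    rw [hi, show 3 * q + 2 + 1 = 3 * (q + 1) by ring, bpZigFace_at2, bpZigFace_at0,
      show (2 * ((q + 1 : ℤ) : ZMod n) + c) = 2 * (q : ZMod n) + 2 + c by push_cast; ring,
      show (2 * ((q + 1 : ℤ) : ZMod n) + 1 + c) = 2 * (q : ZMod n) + 3 + c by push_cast; ring]
    intro hEq
    have hmem : (Sum.inr (2 * (q : ZMod n) + 1 + c) : Bool ⊕ ZMod n) ∈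
        ({Sum.inl (decide ((q + 1) % 2 = 0)), Sum.inr (2 * (q : ZMod n) + 2 + c),
          Sum.inr (2 * (q : ZMod n) + 3 + c)} : Finset (Bool ⊕ ZMod n)) :=
      hEq ▸ (by simp)
    simp only [Finset.mem_insert, Finset.mem_singleton, Sum.inr.injEq, reduceCtorEq,
      false_or] at hmem
    rcases hmem with hh | hh
    · exact one_ne (by linear_combination -hh)
    · exact two_ne (by linear_combination -hh)

end Fields2

def bpZig (n : ℕ) (h4 : 4 ≤ n) (he : n % 2 = 0) (c : ZMod n) : (bp n).Zigzag where
  n := 3 * bpK n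
  three_lt_n := by have := bpK_pos n h4; omega
  seq := bpZigSeq n c
  periodic := by exact_mod_cast bpZig_periodic n h4 he c
  n_minimal := bpZig_minimal n h4 he c
  seq_ne := bpZig_seq_ne n h4 he c
  seq_adj := bpZig_seq_adj n h4 he c
  face := bpZigFace n c
  face_mem := bpZig_face_mem n h4 he c
  subset_face := bpZig_subset_face n h4 he c
  face_unique := bpZig_face_unique n h4 he c
  face_ne := bpZig_face_ne n h4 he c

end PreTriangulation
namespace PreTriangulation

lemma bpZig_not_equiv (n : ℕ) (h4 : 4 ≤ n) (he : n % 2 = 0) :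
    ¬ ZigzagEquiv (bpZig n h4 he 0) (bpZig n h4 he 1) := by
  have hm : 0 < n / 2 := by omega
  have hnm : n = 2 * (n / 2) := by omega
  have e0 : bpZigSeq n 1 0 = Sum.inl true := by
    have := bpZigSeq_at0 n 1 (n / 2) hnm hm 0
    norm_num at this
    exact this
  have e1 : bpZigSeq n 1 1 = Sum.inr 1 := by
    have := bpZigSeq_at1 n 1 (n / 2) hnm hm 0
    norm_num at this
    exact this
  have e2 : bpZigSeq n 1 2 = Sum.inr 2 := by
    have := bpZigSeq_at2 n 1 (n / 2) hnm hm 0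
    norm_num at this
    exact this
  rintro (⟨k, hk⟩ | ⟨k, hk⟩)
  · -- shift
    have hk' : ∀ i : ℤ, bpZigSeq n 1 i = bpZigSeq n 0 (i + k) := hk
    set t := k / 3 with ht
    have h0 := hk' 0
    rw [zero_add, e0] at h0
    have h3 : k % 3 = 0 ∨ k % 3 = 1 ∨ k % 3 = 2 := by omega
    obtain h | h | h := h3
    · have h1 := hk' 1
      rw [e1, show (1 : ℤ) + k = 3 * t + 1 by omega, bpZigSeq_at1 n 0 (n / 2) hnm hm] at h1
      have heq : (1 : ZMod n) = 2 * (t : ZMod n) + 0 := Sum.inr.inj h1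
      have hz : ((1 - 2 * t : ℤ) : ZMod n) = 0 := by push_cast; linear_combination heq
      obtain ⟨s, hs⟩ := (ZMod.intCast_zmod_eq_zero_iff_dvd _ n).mp hz
      obtain ⟨m2, hm2⟩ : ∃ m2 : ℤ, (n : ℤ) = 2 * m2 := ⟨(n : ℤ) / 2, by omega⟩
      have hkey : 1 - 2 * t = 2 * (m2 * s) := by rw [hs, hm2]; ring
      set u := m2 * s with hu
      omega
    · rw [show k = 3 * t + 1 by omega, bpZigSeq_at1 n 0 (n / 2) hnm hm] at h0
      simp at h0
    · rw [show k = 3 * t + 2 by omega, bpZigSeq_at2 n 0 (n / 2) hnm hm] at h0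
      simp at h0
  · -- reversal
    have hk' : ∀ i : ℤ, bpZigSeq n 1 i = bpZigSeq n 0 (k - i) := hk
    set t := k / 3 with ht
    have h0 := hk' 0
    rw [sub_zero, e0] at h0
    have h3 : k % 3 = 0 ∨ k % 3 = 1 ∨ k % 3 = 2 := by omega
    obtain h | h | h := h3
    · have h1 := hk' 1
      rw [e1, show k - 1 = 3 * (t - 1) + 2 by omega, bpZigSeq_at2 n 0 (n / 2) hnm hm] at h1
      have h2 := hk' 2
      rw [e2, show k - 2 = 3 * (t - 1) + 1 by omega, bpZigSeq_at1 n 0 (n / 2) hnm hm] at h2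
      have e1' := Sum.inr.inj h1
      have e2' := Sum.inr.inj h2
      have hz : ((2 : ℕ) : ZMod n) = 0 := by push_cast; linear_combination e2' - e1'
      have hdvd : n ∣ 2 := (ZMod.natCast_eq_zero_iff _ _).mp hz
      have := Nat.le_of_dvd (by norm_num) hdvd
      omega
    · rw [show k = 3 * t + 1 by omega, bpZigSeq_at1 n 0 (n / 2) hnm hm] at h0
      simp at h0
    · rw [show k = 3 * t + 2 by omega, bpZigSeq_at2 n 0 (n / 2) hnm hm] at h0
      simp at h0

end PreTriangulation

open PreTriangulation

theorem statement_4 (n : ℕ) (h4 : 4 ≤ n) (he : Even n) :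
    ¬ (bp n).ZKnotted ∧ ∃ Z Z' : (bp n).Zigzag, ¬ ZigzagEquiv Z Z' := by
  have he2 : n % 2 = 0 := by obtain ⟨m, hm⟩ := he; omega
  have hne := bpZig_not_equiv n h4 he2
  exact ⟨fun hZ => hne (hZ.2 _ _), _, _, hne⟩
end
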